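/- arXiv:1710.04732 — 7 statements merged into one kernel-verified Lean document; each statement's English description precedes it below -/
import Mathlib

section
/- Let M ≥ 1 and set y_0 = 0. Then the infimum over all y_1,…,y_{M-1} ≥ 0 of the sum ∑_{i=1}^M e^{-y_{i-1}} y_i tends to infinity as y_M → ∞. Equivalently: for every C > 0 there exists L > 0 such that for all y_1,…,y_{M-1} ≥ 0 and all y_M ≥ L one has ∑_{i=1}^M e^{-y_{i-1}} y_i ≥ C. -/
/-- For `M ≥ 1`, with `y 0 = 0`, the infimum over `y 1, …, y (M-1) ≥ 0` of
`∑_{i=1}^M e^{-y (i-1)} * y i` tends to infinity as `y M → ∞`: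
for every `C > 0` there is `L > 0` such that the sum is `≥ C` whenever
`y 1, …, y (M-1) ≥ 0` and `y M ≥ L`. -/
theorem stmt_0 (M : ℕ) (hM : 1 ≤ M) :
    ∀ C > (0 : ℝ), ∃ L > (0 : ℝ), ∀ y : ℕ → ℝ, y 0 = 0 →
      (∀ i, 1 ≤ i → i ≤ M - 1 → 0 ≤ y i) → L ≤ y M →
      C ≤ ∑ i ∈ Finset.Icc 1 M, Real.exp (-(y (i - 1))) * y i := by
  induction M, hM using Nat.le_induction with
  | base =>
    intro C hC
    refine ⟨C, hC, fun y h0 _ hL => ?_⟩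
    simp [Finset.Icc_self, h0]
    linarith
  | succ M hM ih =>
    intro C hC
    obtain ⟨L, hL, hmain⟩ := ih C hC
    refine ⟨C * Real.exp L, by positivity, ?_⟩
    intro y h0 hnn hyL
    rw [Finset.sum_Icc_succ_top (by omega : 1 ≤ M + 1)]
    simp only [Nat.add_sub_cancel]
    have hyM1 : 0 < y (M + 1) := lt_of_lt_of_le (by positivity) hyL
    by_cases hc : L ≤ y M
    · have h1 := hmain y h0 (fun i h1 h2 => hnn i h1 (by omega)) hc
      have h2 : 0 ≤ Real.exp (-(y M)) * y (M + 1) :=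
        mul_nonneg (Real.exp_nonneg _) hyM1.le
      linarith
    · push_neg at hc
      have hsum : 0 ≤ ∑ i ∈ Finset.Icc 1 M, Real.exp (-(y (i - 1))) * y i := by
        apply Finset.sum_nonneg
        intro i hi
        simp only [Finset.mem_Icc] at hi
        exact mul_nonneg (Real.exp_nonneg _) (hnn i hi.1 (by omega))
      have hterm : C ≤ Real.exp (-(y M)) * y (M + 1) := by
        have h3 : Real.exp (-L) ≤ Real.exp (-(y M)) := Real.exp_le_exp.mpr (by linarith)
        have h4 : C = (C * Real.exp L) * Real.exp (-L) := by
          rw [mul_assoc, ← Real.exp_add]; simp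
        rw [h4]
        have h5 : 0 < Real.exp (-L) := Real.exp_pos _
        nlinarith [Real.exp_pos (-(y M))]
      linarith
end

section
/- Let G = (C, R) be a finite strongly connected directed graph on m ≥ 2 vertices with edge labels κ : R → ℝ₊, and let A_κ ∈ ℝ^{m×m} be its Laplacian, defined by (A_κ)_{ji} = κ_{ij} for (i,j) ∈ R with i ≠ j and diagonal entries (A_κ)_{ii} = -∑_j κ_{ij}. Then there exists L > 0 such that for all z ∈ ℝ^m with ∑_{i=1}^m z_i = 0 and max(z) ≥ L, one has z^⊤ A_κ e^z < 0, where e^z is the coordinatewise exponential. -/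
open Finset

private noncomputable def iterSeq (C : ℝ) : ℕ → ℝ :=
  fun k => Nat.rec 0 (fun _ s => s + C * Real.exp s) k

private lemma iterSeq_zero (C : ℝ) : iterSeq C 0 = 0 := rfl

private lemma iterSeq_succ (C : ℝ) (k : ℕ) :
    iterSeq C (k + 1) = iterSeq C k + C * Real.exp (iterSeq C k) := rfl

private lemma iterSeq_nonneg {C : ℝ} (hC : 0 ≤ C) : ∀ k, 0 ≤ iterSeq C k
  | 0 => le_refl 0
  | k + 1 => by
      have h1 := iterSeq_nonneg hC k
      have h2 := (Real.exp_pos (iterSeq C k)).le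
      rw [iterSeq_succ]
      nlinarith

private lemma iterSeq_le_succ {C : ℝ} (hC : 0 ≤ C) (k : ℕ) :
    iterSeq C k ≤ iterSeq C (k + 1) := by
  have := (Real.exp_pos (iterSeq C k)).le
  rw [iterSeq_succ]; nlinarith

private lemma iterSeq_mono {C : ℝ} (hC : 0 ≤ C) : Monotone (iterSeq C) :=
  monotone_nat_of_le_succ (iterSeq_le_succ hC)

private lemma cross_edge {α : Type*} (r : α → α → Prop) (B : Finset α) :
    ∀ {i j : α}, Relation.ReflTransGen r i j → i ∈ B → j ∉ B →
      ∃ a b, a ∈ B ∧ b ∉ B ∧ r a b := by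
  intro i j h
  induction h with
  | refl => intro hi hj; exact absurd hi hj
  | @tail b c _ h₂ ih =>
      intro hi hj
      by_cases hb : b ∈ B
      · exact ⟨b, c, hb, hj, h₂⟩
      · exact ih hi hb

private lemma edge_bound (c x y M : ℝ) (hc : 0 < c) (hy : y ≤ M) :
    Real.exp x * c * (y - x) ≤ c * Real.exp M := by
  have hM : Real.exp y ≤ Real.exp M := Real.exp_le_exp.mpr hy
  have key : Real.exp x * (y - x) ≤ Real.exp M := by
    rcases le_or_gt (y - x) 0 with h | h
    · nlinarith [Real.exp_pos x, Real.exp_pos M]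
    · have h1 : y - x ≤ Real.exp (y - x) := by nlinarith [Real.add_one_le_exp (y - x)]
      calc Real.exp x * (y - x) ≤ Real.exp x * Real.exp (y - x) :=
            mul_le_mul_of_nonneg_left h1 (Real.exp_pos x).le
        _ = Real.exp y := by rw [← Real.exp_add]; ring_nf
        _ ≤ Real.exp M := hM
  calc Real.exp x * c * (y - x) = c * (Real.exp x * (y - x)) := by ring
    _ ≤ c * Real.exp M := mul_le_mul_of_nonneg_left key hc.le

private lemma neg_edge_bound (c c₀ x y β G : ℝ) (hc₀ : 0 < c₀) (hc : c₀ ≤ c)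
    (hx : β ≤ x) (hy : y ≤ β - G) (hG : 0 < G) :
    Real.exp x * c * (y - x) ≤ -(c₀ * G * Real.exp β) := by
  have h1 : y - x ≤ -G := by linarith
  have h2 : c * (y - x) ≤ -(c₀ * G) := by nlinarith
  have h3 : Real.exp β ≤ Real.exp x := Real.exp_le_exp.mpr hx
  nlinarith [Real.exp_pos x, Real.exp_pos β,
    mul_le_mul_of_nonneg_left h2 (Real.exp_pos x).le,
    mul_le_mul_of_nonneg_right h3 (mul_pos hc₀ hG).le]

/-- Let `(C, R)` be a finite strongly connected digraph on `m ≥ 2` vertices without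
self-loops, with positive edge labels `κ`. Then there is `L > 0` such that for every
`z ∈ ℝ^m` with `∑ i, z i = 0` and `max(z) ≥ L` one has
`z^⊤ A_κ e^z = ∑_{(i,j)∈R} e^{z_i} κ_{ij} (z_j − z_i) < 0`. -/
theorem stmt_7 (m : ℕ) (hm : 2 ≤ m) (R : Finset (Fin m × Fin m))
    (hloop : ∀ e ∈ R, e.1 ≠ e.2)
    (hconn : ∀ i j : Fin m, Relation.ReflTransGen (fun a b => (a, b) ∈ R) i j)
    (κ : Fin m × Fin m → ℝ) (hκ : ∀ e ∈ R, 0 < κ e) :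
    ∃ L > (0 : ℝ), ∀ z : Fin m → ℝ, (∑ i, z i = 0) → (∃ k, L ≤ z k) →
      ∑ e ∈ R, Real.exp (z e.1) * κ e * (z e.2 - z e.1) < 0 := by
  have hm0 : 0 < m := by omega
  haveI : Nonempty (Fin m) := ⟨⟨0, hm0⟩⟩
  have hne : (⟨0, by omega⟩ : Fin m) ≠ ⟨1, by omega⟩ := by
    intro h
    have := congrArg Fin.val h
    simp at this
  have hRne : R.Nonempty := by
    rcases (hconn ⟨0, by omega⟩ ⟨1, by omega⟩).cases_head with h | ⟨c, hc, -⟩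
    · exact absurd h hne
    · exact ⟨_, hc⟩
  set κ₀ := R.inf' hRne κ with hκ₀def
  have hκ₀ : 0 < κ₀ := by
    rw [hκ₀def, Finset.lt_inf'_iff]
    exact hκ
  set K := ∑ e ∈ R, κ e with hKdef
  have hK : 0 < K := Finset.sum_pos hκ hRne
  set C := K / κ₀ + 1 with hCdef
  have hC : 0 < C := by positivity
  have hκC : κ₀ * C = K + κ₀ := by
    rw [hCdef]; field_simp
  set t := iterSeq C with htdef
  have htnn : ∀ k, 0 ≤ t k := fun k => iterSeq_nonneg hC.le k
  refine ⟨t m + 1, by nlinarith [htnn m], ?_⟩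
  rintro z hsum ⟨k0, hk0⟩
  obtain ⟨i₀, -, hi₀⟩ := Finset.exists_max_image Finset.univ z Finset.univ_nonempty
  set M := z i₀ with hMdef
  have hMub : ∀ i, z i ≤ M := fun i => hi₀ i (Finset.mem_univ i)
  have hLM : t m + 1 ≤ M := le_trans hk0 (hMub k0)
  have hneg : ∃ j, z j < 0 := by
    by_contra h
    push_neg at h
    have h1 : z i₀ ≤ ∑ i, z i := Finset.single_le_sum (fun i _ => h i) (Finset.mem_univ i₀)
    rw [hsum] at h1
    nlinarith [htnn m]
  obtain ⟨j₀, hj₀⟩ := hneg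
  have key : ∀ k, k ≤ m →
      (∑ e ∈ R, Real.exp (z e.1) * κ e * (z e.2 - z e.1) < 0) ∨
      (k + 1 ≤ (Finset.univ.filter (fun i => M - t k ≤ z i)).card) := by
    intro k
    induction k with
    | zero =>
        intro _
        right
        have hmem : i₀ ∈ Finset.univ.filter (fun i => M - t 0 ≤ z i) := by
          rw [Finset.mem_filter]
          refine ⟨Finset.mem_univ _, ?_⟩
          have h0 : t 0 = 0 := iterSeq_zero C
          linarith
        exact Finset.one_le_card.mpr ⟨i₀, hmem⟩
    | succ k ih =>
        intro hk
        rcases ih (by omega) with h | h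
        · exact Or.inl h
        · have hBne : (Finset.univ.filter (fun i => M - t k ≤ z i)).Nonempty :=
            Finset.card_pos.mp (by omega)
          set B := Finset.univ.filter (fun i => M - t k ≤ z i) with hBdef
          set β := B.inf' hBne z with hβdef
          have hβle : ∀ i ∈ B, β ≤ z i := fun i hi => Finset.inf'_le z hi
          have hβge : M - t k ≤ β := by
            apply Finset.le_inf'
            intro i hi
            rw [hBdef, Finset.mem_filter] at hi
            exact hi.2
          have hi₀B : i₀ ∈ B := by
            rw [hBdef, Finset.mem_filter]
            exact ⟨Finset.mem_univ _, by linarith [htnn k]⟩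
          have hβM : β ≤ M := Finset.inf'_le z hi₀B
          set T := M - β with hTdef
          have hT0 : 0 ≤ T := by rw [hTdef]; linarith
          have hTk : T ≤ t k := by rw [hTdef]; linarith
          have htk_le : t k ≤ t m := iterSeq_mono hC.le (by omega)
          have htsucc : t (k + 1) = t k + C * Real.exp (t k) := iterSeq_succ C k
          by_cases hcase : ∀ j, j ∉ B → z j ≤ β - C * Real.exp T
          · left
            have hj₀B : j₀ ∉ B := by
              rw [hBdef, Finset.mem_filter]
              rintro ⟨-, habs⟩
              nlinarith
            obtain ⟨a, b, haB, hbB, hab⟩ :=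
              cross_edge (fun a b => (a, b) ∈ R) B (hconn i₀ j₀) hi₀B hj₀B
            have hb1 : ∑ e ∈ R.erase (a, b), Real.exp (z e.1) * κ e * (z e.2 - z e.1)
                ≤ ∑ e ∈ R.erase (a, b), κ e * Real.exp M := by
              apply Finset.sum_le_sum
              intro e he
              exact edge_bound (κ e) (z e.1) (z e.2) M
                (hκ e (Finset.mem_of_mem_erase he)) (hMub e.2)
            have hb2 : ∑ e ∈ R.erase (a, b), κ e * Real.exp M ≤ K * Real.exp M := by
              rw [← Finset.sum_mul, hKdef]
              apply mul_le_mul_of_nonneg_right _ (Real.exp_pos M).le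
              exact Finset.sum_le_sum_of_subset_of_nonneg (Finset.erase_subset _ _)
                (fun e he _ => (hκ e he).le)
            have hb3 : Real.exp (z (a, b).1) * κ (a, b) * (z (a, b).2 - z (a, b).1)
                ≤ -(κ₀ * (C * Real.exp T) * Real.exp β) :=
              neg_edge_bound (κ (a, b)) κ₀ (z a) (z b) β (C * Real.exp T) hκ₀
                (Finset.inf'_le κ hab) (hβle a haB) (hcase b hbB) (by positivity)
            have hfin : κ₀ * (C * Real.exp T) * Real.exp β = (K + κ₀) * Real.exp M := by
              calc κ₀ * (C * Real.exp T) * Real.exp β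
                  = (κ₀ * C) * (Real.exp T * Real.exp β) := by ring
                _ = (K + κ₀) * Real.exp M := by
                    rw [hκC, ← Real.exp_add]
                    congr 2
                    rw [hTdef]; ring
            rw [hfin] at hb3
            calc ∑ e ∈ R, Real.exp (z e.1) * κ e * (z e.2 - z e.1)
                = ∑ e ∈ R.erase (a, b), Real.exp (z e.1) * κ e * (z e.2 - z e.1)
                  + Real.exp (z (a, b).1) * κ (a, b) * (z (a, b).2 - z (a, b).1) :=
                  (Finset.sum_erase_add R _ hab).symm
              _ < 0 := by nlinarith [mul_pos hκ₀ (Real.exp_pos M)]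
          · right
            push_neg at hcase
            obtain ⟨j, hjB, hjz⟩ := hcase
            have hsub : insert j B ⊆
                Finset.univ.filter (fun i => M - t (k + 1) ≤ z i) := by
              intro x hx
              rw [Finset.mem_insert] at hx
              rw [Finset.mem_filter]
              refine ⟨Finset.mem_univ _, ?_⟩
              rcases hx with rfl | hxB
              · have h5 : Real.exp T ≤ Real.exp (t k) := Real.exp_le_exp.mpr hTk
                have h6 : C * Real.exp T ≤ C * Real.exp (t k) :=
                  mul_le_mul_of_nonneg_left h5 hC.le
                rw [htsucc]
                linarith
              · rw [hBdef, Finset.mem_filter] at hxB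
                rw [htsucc]
                nlinarith [Real.exp_pos (t k), hxB.2]
            have hcard : (insert j B).card = B.card + 1 := Finset.card_insert_of_notMem hjB
            have hle := Finset.card_le_card hsub
            omega
  rcases key m le_rfl with h | h
  · exact h
  · exfalso
    have hcard : (Finset.univ.filter (fun i => M - t m ≤ z i)).card ≤ m := by
      calc (Finset.univ.filter (fun i => M - t m ≤ z i)).card
          ≤ (Finset.univ : Finset (Fin m)).card := Finset.card_filter_le _ _
        _ = m := by simp
    omega
end

section
/- Let (C, R) be a finite strongly connected directed graph on m ≥ 2 vertices and let D > 0. Then there exists L > 0, depending only on the graph and D, such that for every edge-labelling κ : R → ℝ₊ satisfying max(κ)/min(κ) ≤ D and for every z ∈ ℝ^m with ∑ z_i = 0 and max(z) ≥ L, one has z^⊤ A_κ e^z < 0. -/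
private noncomputable def Bseq (C : ℝ) : ℕ → ℝ
  | 0 => 0
  | s + 1 => Bseq C s + C * Real.exp (Bseq C s)

private lemma Bseq_nonneg {C : ℝ} (hC : 0 ≤ C) : ∀ s, 0 ≤ Bseq C s
  | 0 => le_refl 0
  | s + 1 => by
      have h1 := Bseq_nonneg hC s
      have h2 : 0 ≤ C * Real.exp (Bseq C s) := mul_nonneg hC (Real.exp_pos _).le
      show 0 ≤ Bseq C s + C * Real.exp (Bseq C s)
      linarith

private lemma Bseq_step {C : ℝ} (hC : 0 ≤ C) (s : ℕ) : Bseq C s ≤ Bseq C (s + 1) := by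
  have h2 : 0 ≤ C * Real.exp (Bseq C s) := mul_nonneg hC (Real.exp_pos _).le
  show Bseq C s ≤ Bseq C s + C * Real.exp (Bseq C s)
  linarith

/-- Let `(C, R)` be a finite strongly connected digraph on `m ≥ 2` vertices without
self-loops and let `D > 0`. Then there is `L > 0`, depending only on the graph and `D`,
such that for every positive edge-labelling `κ` with `max(κ)/min(κ) ≤ D`
(i.e. `κ e ≤ D * κ e'` for all edges `e, e'`) and every `z ∈ ℝ^m` with `∑ i, z i = 0`
and `max(z) ≥ L`, one has `z^⊤ A_κ e^z = ∑_{(i,j)∈R} e^{z_i} κ_{ij} (z_j − z_i) < 0`. -/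
theorem stmt_9 (m : ℕ) (hm : 2 ≤ m) (R : Finset (Fin m × Fin m))
    (hloop : ∀ e ∈ R, e.1 ≠ e.2)
    (hconn : ∀ i j : Fin m, Relation.ReflTransGen (fun a b => (a, b) ∈ R) i j)
    (D : ℝ) (hD : 0 < D) :
    ∃ L > (0 : ℝ), ∀ κ : Fin m × Fin m → ℝ, (∀ e ∈ R, 0 < κ e) →
      (∀ e ∈ R, ∀ e' ∈ R, κ e ≤ D * κ e') →
      ∀ z : Fin m → ℝ, (∑ i, z i = 0) → (∃ k, L ≤ z k) →
        ∑ e ∈ R, Real.exp (z e.1) * κ e * (z e.2 - z e.1) < 0 := by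
  haveI : NeZero m := ⟨by omega⟩
  set C : ℝ := (R.card : ℝ) * D + 1 with hCdef
  have hC : 0 < C := by positivity
  have hBnn := Bseq_nonneg hC.le (m - 1)
  refine ⟨Bseq C (m - 1) + 1, by linarith, ?_⟩
  intro κ hκpos hκD z hsum hk
  obtain ⟨k, hk⟩ := hk
  -- R is nonempty
  have hRne : R.Nonempty := by
    have h01 := hconn ⟨0, by omega⟩ ⟨1, by omega⟩
    rcases h01.cases_head with heq | ⟨a, ha, -⟩
    · exact absurd heq (by simp [Fin.ext_iff])
    · exact ⟨_, ha⟩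
  -- minimum rate
  set c : ℝ := R.inf' hRne κ with hcdef
  have hc_pos : 0 < c := by
    rw [hcdef, Finset.lt_inf'_iff]
    exact hκpos
  have hc_le : ∀ e ∈ R, c ≤ κ e := fun e he => Finset.inf'_le κ he
  obtain ⟨e₀, he₀, hce₀⟩ := Finset.exists_mem_eq_inf' hRne κ
  have hκ_le_Dc : ∀ e ∈ R, κ e ≤ D * c := by
    intro e he
    rw [hcdef, hce₀]
    exact hκD e he e₀ he₀
  -- the maximum of z
  have hune : (Finset.univ : Finset (Fin m)).Nonempty := Finset.univ_nonempty
  set M : ℝ := Finset.univ.sup' hune z with hMdef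
  have hzM : ∀ i, z i ≤ M := fun i => Finset.le_sup' z (Finset.mem_univ i)
  obtain ⟨kM, -, hkM⟩ := Finset.exists_mem_eq_sup' hune z
  have hML : Bseq C (m - 1) + 1 ≤ M := le_trans hk (hzM k)
  -- per-edge upper bound
  have hbound : ∀ e ∈ R, Real.exp (z e.1) * κ e * (z e.2 - z e.1) ≤ D * c * Real.exp M := by
    intro e he
    have hDc : 0 < D * c := mul_pos hD hc_pos
    have heM : 0 < Real.exp M := Real.exp_pos M
    rcases le_or_gt (z e.2) (z e.1) with h | h
    · have h1 : Real.exp (z e.1) * κ e * (z e.2 - z e.1) ≤ 0 :=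
        mul_nonpos_of_nonneg_of_nonpos
          (mul_pos (Real.exp_pos _) (hκpos e he)).le (by linarith)
      nlinarith
    · have h1 : z e.2 - z e.1 ≤ Real.exp (z e.2 - z e.1) := by
        linarith [Real.add_one_le_exp (z e.2 - z e.1)]
      have h2 : Real.exp (z e.1) * (z e.2 - z e.1) ≤ Real.exp (z e.2) := by
        calc Real.exp (z e.1) * (z e.2 - z e.1)
            ≤ Real.exp (z e.1) * Real.exp (z e.2 - z e.1) :=
              mul_le_mul_of_nonneg_left h1 (Real.exp_pos _).le
          _ = Real.exp (z e.2) := by rw [← Real.exp_add]; ring_nf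
      have h3 : Real.exp (z e.2) ≤ Real.exp M := Real.exp_le_exp.mpr (hzM e.2)
      have h4 : κ e ≤ D * c := hκ_le_Dc e he
      have h5 : 0 < Real.exp (z e.1) * (z e.2 - z e.1) := by
        have := Real.exp_pos (z e.1); nlinarith
      nlinarith [hκpos e he]
  by_cases hgood : ∃ g ∈ R, C * Real.exp M < Real.exp (z g.1) * (z g.1 - z g.2)
  · -- a good edge exists: its negative term dominates
    obtain ⟨g, hgR, hg⟩ := hgood
    rw [← Finset.add_sum_erase R _ hgR]
    have h5 : ∑ e ∈ R.erase g, Real.exp (z e.1) * κ e * (z e.2 - z e.1)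
        ≤ (R.card : ℝ) * (D * c * Real.exp M) := by
      calc ∑ e ∈ R.erase g, Real.exp (z e.1) * κ e * (z e.2 - z e.1)
          ≤ ∑ _e ∈ R.erase g, D * c * Real.exp M :=
            Finset.sum_le_sum fun e he => hbound e (Finset.mem_of_mem_erase he)
        _ = ((R.erase g).card : ℝ) * (D * c * Real.exp M) := by
            rw [Finset.sum_const, nsmul_eq_mul]
        _ ≤ (R.card : ℝ) * (D * c * Real.exp M) := by
            have hcard : (R.erase g).card ≤ R.card := Finset.card_erase_le
            have : ((R.erase g).card : ℝ) ≤ (R.card : ℝ) := by exact_mod_cast hcard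
            have hpos : 0 ≤ D * c * Real.exp M := by positivity
            nlinarith
    have hQpos : 0 < Real.exp (z g.1) * (z g.1 - z g.2) := by
      have := Real.exp_pos M; nlinarith
    have h7 : c * (C * Real.exp M) < c * (Real.exp (z g.1) * (z g.1 - z g.2)) :=
      mul_lt_mul_of_pos_left hg hc_pos
    have h8 : c * (Real.exp (z g.1) * (z g.1 - z g.2))
        ≤ κ g * (Real.exp (z g.1) * (z g.1 - z g.2)) :=
      mul_le_mul_of_nonneg_right (hc_le g hgR) hQpos.le
    have h6 : Real.exp (z g.1) * κ g * (z g.2 - z g.1) < -(c * (C * Real.exp M)) := by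
      nlinarith
    rw [hCdef] at h6
    nlinarith [mul_pos hc_pos (Real.exp_pos M)]
  · -- no good edge: expanding set argument gives a contradiction
    exfalso
    push_neg at hgood
    set P : ℕ → Finset (Fin m) :=
      fun s => Finset.univ.filter (fun i => M - Bseq C s ≤ z i) with hPdef
    have hPmono : ∀ s, P s ⊆ P (s + 1) := by
      intro s i hi
      rw [hPdef, Finset.mem_filter] at hi ⊢
      exact ⟨hi.1, le_trans (by linarith [Bseq_step hC.le s]) hi.2⟩
    -- crossing edge lemma
    have key : ∀ i j : Fin m, Relation.ReflTransGen (fun a b => (a, b) ∈ R) i j →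
        ∀ S : Finset (Fin m), i ∈ S → j ∉ S → ∃ e ∈ R, e.1 ∈ S ∧ e.2 ∉ S := by
      intro i j h
      induction h with
      | refl => intro S hi hj; exact absurd hi hj
      | @tail b cc hab hbc ih =>
        intro S hi hj
        by_cases hb : b ∈ S
        · exact ⟨(b, cc), hbc, hb, hj⟩
        · exact ih S hi hb
    have hcard : ∀ s, min (s + 1) m ≤ (P s).card := by
      intro s
      induction s with
      | zero =>
        have hkMmem : kM ∈ P 0 := by
          rw [hPdef, Finset.mem_filter]
          refine ⟨Finset.mem_univ _, ?_⟩
          show M - Bseq C 0 ≤ z kM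
          rw [show Bseq C 0 = 0 from rfl, ← hkM]
          linarith
        have : 1 ≤ (P 0).card := Finset.card_pos.mpr ⟨kM, hkMmem⟩
        omega
      | succ s ih =>
        rcases le_or_gt m (s + 1) with h | h
        · have h1 : min (s + 1) m = m := by omega
          have h2 : (P s).card ≤ (P (s + 1)).card := Finset.card_le_card (hPmono s)
          omega
        · by_cases hU : ∀ j, j ∈ P s
          · have : P s = Finset.univ := Finset.eq_univ_iff_forall.mpr hU
            have h2 : (P s).card = m := by rw [this, Finset.card_univ, Fintype.card_fin]
            have h3 : (P s).card ≤ (P (s + 1)).card := Finset.card_le_card (hPmono s)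
            omega
          · push_neg at hU
            obtain ⟨j, hj⟩ := hU
            have hPsne : (P s).Nonempty := by
              refine Finset.card_pos.mp ?_
              have : min (s + 1) m = s + 1 := by omega
              omega
            obtain ⟨i0, hi0⟩ := hPsne
            obtain ⟨e, heR, he1, he2⟩ := key i0 j (hconn i0 j) (P s) hi0 hj
            -- e.2 lands in P (s+1)
            have he2' : e.2 ∈ P (s + 1) := by
              rw [hPdef, Finset.mem_filter]
              refine ⟨Finset.mem_univ _, ?_⟩
              have hz1 : M - Bseq C s ≤ z e.1 := by
                rw [hPdef, Finset.mem_filter] at he1; exact he1.2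
              have hng := hgood e heR
              have hexp : Real.exp (M - z e.1) ≤ Real.exp (Bseq C s) :=
                Real.exp_le_exp.mpr (by linarith)
              have hdrop : z e.1 - z e.2 ≤ C * Real.exp (Bseq C s) := by
                have hea : 0 < Real.exp (z e.1) := Real.exp_pos _
                have hsplit : Real.exp M = Real.exp (z e.1) * Real.exp (M - z e.1) := by
                  rw [← Real.exp_add]; ring_nf
                have h9 : Real.exp (z e.1) * (z e.1 - z e.2)
                    ≤ Real.exp (z e.1) * (C * Real.exp (M - z e.1)) := by
                  calc Real.exp (z e.1) * (z e.1 - z e.2) ≤ C * Real.exp M := hng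
                    _ = Real.exp (z e.1) * (C * Real.exp (M - z e.1)) := by
                        rw [hsplit]; ring
                have h10 : Real.exp (z e.1) * (z e.1 - z e.2)
                    ≤ Real.exp (z e.1) * (C * Real.exp (Bseq C s)) :=
                  le_trans h9 (mul_le_mul_of_nonneg_left
                    (mul_le_mul_of_nonneg_left hexp hC.le) hea.le)
                exact le_of_mul_le_mul_left h10 hea
              show M - Bseq C (s + 1) ≤ z e.2
              have hB : Bseq C (s + 1) = Bseq C s + C * Real.exp (Bseq C s) := rfl
              rw [hB]
              linarith
            have hsub : insert e.2 (P s) ⊆ P (s + 1) := by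
              intro x hx
              rcases Finset.mem_insert.mp hx with hx | hx
              · rw [hx]; exact he2'
              · exact hPmono s hx
            have h11 : (insert e.2 (P s)).card = (P s).card + 1 :=
              Finset.card_insert_of_notMem he2
            have h12 : (insert e.2 (P s)).card ≤ (P (s + 1)).card :=
              Finset.card_le_card hsub
            have : min (s + 1) m = s + 1 := by omega
            omega
    -- conclude all coordinates are large
    have hall : ∀ i, M - Bseq C (m - 1) ≤ z i := by
      have h1 := hcard (m - 1)
      have h2 : min (m - 1 + 1) m = m := by omega
      rw [h2] at h1
      have h3 : (P (m - 1)).card ≤ m := by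
        have := Finset.card_le_card (Finset.subset_univ (P (m - 1)))
        rwa [Finset.card_univ, Fintype.card_fin] at this
      have h4 : P (m - 1) = Finset.univ := by
        apply Finset.eq_univ_of_card
        rw [Fintype.card_fin]; omega
      intro i
      have : i ∈ P (m - 1) := h4 ▸ Finset.mem_univ i
      rw [hPdef, Finset.mem_filter] at this
      exact this.2
    have hsumge : (m : ℝ) * (M - Bseq C (m - 1)) ≤ ∑ i, z i := by
      calc (m : ℝ) * (M - Bseq C (m - 1))
          = ∑ _i : Fin m, (M - Bseq C (m - 1)) := by
            rw [Finset.sum_const, Finset.card_univ, Fintype.card_fin, nsmul_eq_mul]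
        _ ≤ ∑ i, z i := Finset.sum_le_sum fun i _ => hall i
    rw [hsum] at hsumge
    have hm2 : (2 : ℝ) ≤ (m : ℝ) := by exact_mod_cast hm
    nlinarith
end

section
/- Let (C, R) be a finite strongly connected directed graph with positive edge labels κ and Laplacian A_κ ∈ ℝ^{m×m}. Then for every ϱ ≥ 0 there exists R_ϱ > 0 such that z^⊤ A_κ e^{z+w} < 0 for all w ∈ ℝ^m with |w| ≤ ϱ and all z ∈ ℝ^m with ∑ z_i = 0 and |z| ≥ R_ϱ. -/
private noncomputable def uSeq (c : ℝ) : ℕ → ℝ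
  | 0 => 0
  | t + 1 => uSeq c t + c * Real.exp (uSeq c t)

private lemma uSeq_nonneg {c : ℝ} (hc : 0 ≤ c) : ∀ t, 0 ≤ uSeq c t
  | 0 => le_refl 0
  | t + 1 => by
      have h1 := uSeq_nonneg hc t
      have h2 := Real.exp_pos (uSeq c t)
      simp only [uSeq]
      nlinarith

private lemma uSeq_step {c : ℝ} (hc : 0 ≤ c) (t : ℕ) : uSeq c t ≤ uSeq c (t + 1) := by
  have h2 := Real.exp_pos (uSeq c t)
  simp only [uSeq]
  nlinarith

private lemma cross_lemma {α : Type*} {r : α → α → Prop} {P : α → Prop} {i j : α}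
    (h : Relation.ReflTransGen r i j) : P i → ¬ P j → ∃ a b, P a ∧ ¬ P b ∧ r a b := by
  induction h with
  | refl => intro hi hj; exact absurd hi hj
  | @tail b c _ hbc ih =>
    intro hi hj
    by_cases hb : P b
    · exact ⟨b, c, hb, hj, hbc⟩
    · exact ih hi hb

private lemma term_bound {κe κmx ϱ xi wi xj M : ℝ} (hκ : 0 < κe) (hκm : κe ≤ κmx)
    (hw : |wi| ≤ ϱ) (hxj : xj ≤ M) :
    Real.exp (xi + wi) * κe * (xj - xi) ≤ Real.exp ϱ * κmx * Real.exp M := by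
  have hκmx : 0 < κmx := lt_of_lt_of_le hκ hκm
  rcases le_or_gt (xj - xi) 0 with h | h
  · have h1 : Real.exp (xi + wi) * κe * (xj - xi) ≤ 0 :=
      mul_nonpos_of_nonneg_of_nonpos (by positivity) h
    have h2 : 0 < Real.exp ϱ * κmx * Real.exp M := by positivity
    linarith
  · have hwle : wi ≤ ϱ := (abs_le.mp hw).2
    have h2 : Real.exp (xi + wi) ≤ Real.exp (xi + ϱ) := Real.exp_le_exp.mpr (by linarith)
    have h3 : xj - xi ≤ Real.exp (xj - xi) := by
      have := Real.add_one_le_exp (xj - xi); linarith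
    calc Real.exp (xi + wi) * κe * (xj - xi)
        ≤ Real.exp (xi + ϱ) * κmx * (xj - xi) := by
          apply mul_le_mul_of_nonneg_right _ h.le
          exact mul_le_mul h2 hκm hκ.le (Real.exp_pos _).le
      _ ≤ Real.exp (xi + ϱ) * κmx * Real.exp (xj - xi) := by
          apply mul_le_mul_of_nonneg_left h3 (by positivity)
      _ = Real.exp ϱ * κmx * Real.exp xj := by
          rw [mul_comm (Real.exp (xi + ϱ)) κmx, mul_assoc, ← Real.exp_add,
            show xi + ϱ + (xj - xi) = ϱ + xj by ring, Real.exp_add]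
          ring
      _ ≤ Real.exp ϱ * κmx * Real.exp M := by
          apply mul_le_mul_of_nonneg_left (Real.exp_le_exp.mpr hxj) (by positivity)

/-- Let `(C, R)` be a finite strongly connected digraph on `m ≥ 2` vertices without
self-loops, with positive edge labels `κ`. Then for every `ϱ ≥ 0` there is `R_ϱ > 0`
such that `z^⊤ A_κ e^{z+w} = ∑_{(i,j)∈R} e^{z_i + w_i} κ_{ij} (z_j − z_i) < 0` for all
`w` with `|w| ≤ ϱ` and all `z` with `∑ i, z i = 0` and `|z| ≥ R_ϱ`. -/
theorem stmt_10 (m : ℕ) (hm : 2 ≤ m) (R : Finset (Fin m × Fin m))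
    (hloop : ∀ e ∈ R, e.1 ≠ e.2)
    (hconn : ∀ i j : Fin m, Relation.ReflTransGen (fun a b => (a, b) ∈ R) i j)
    (κ : Fin m × Fin m → ℝ) (hκ : ∀ e ∈ R, 0 < κ e) :
    ∀ ϱ ≥ (0 : ℝ), ∃ Rϱ > (0 : ℝ), ∀ w : EuclideanSpace ℝ (Fin m), ‖w‖ ≤ ϱ →
      ∀ z : EuclideanSpace ℝ (Fin m), (∑ i, z i = 0) → Rϱ ≤ ‖z‖ →
        ∑ e ∈ R, Real.exp (z e.1 + w e.1) * κ e * (z e.2 - z e.1) < 0 := by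
  intro ϱ hϱ
  haveI : Nonempty (Fin m) := ⟨⟨0, by omega⟩⟩
  have huniv : (Finset.univ : Finset (Fin m)).Nonempty := Finset.univ_nonempty
  have hRne : R.Nonempty := by
    have h01 : (⟨0, by omega⟩ : Fin m) ≠ (⟨1, by omega⟩ : Fin m) := by
      simp [Fin.ext_iff]
    rcases (hconn ⟨0, by omega⟩ ⟨1, by omega⟩).cases_head with heq | ⟨cc, hc, _⟩
    · exact absurd heq h01
    · exact ⟨_, hc⟩
  set κmin := R.inf' hRne κ with hκmin_def
  set κmax := R.sup' hRne κ with hκmax_def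
  have hκminpos : 0 < κmin := by
    rw [hκmin_def, Finset.lt_inf'_iff]
    exact hκ
  have hminmax : ∀ e ∈ R, κ e ≤ κmax := fun e he => Finset.le_sup' κ he
  have hκmaxpos : 0 < κmax := by
    obtain ⟨e, he⟩ := hRne
    exact lt_of_lt_of_le (hκ e he) (hminmax e he)
  set N : ℝ := (R.card : ℝ) with hN
  have hNnn : 0 ≤ N := Nat.cast_nonneg _
  set c := ((N * Real.exp ϱ * κmax) + 1) * Real.exp ϱ / κmin with hcdef
  have hcpos : 0 < c := by
    apply div_pos _ hκminpos
    apply mul_pos _ (Real.exp_pos _)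
    have h9 : 0 ≤ N * Real.exp ϱ * κmax :=
      mul_nonneg (mul_nonneg hNnn (Real.exp_pos ϱ).le) hκmaxpos.le
    linarith
  set D := uSeq c m with hDdef
  have hDnn : 0 ≤ D := by rw [hDdef]; exact uSeq_nonneg hcpos.le m
  have hmpos : (0 : ℝ) < (m : ℝ) := by exact_mod_cast (by omega : 0 < m)
  have hsm : 0 < Real.sqrt m := Real.sqrt_pos.mpr hmpos
  refine ⟨Real.sqrt m * (D + 1), mul_pos hsm (by linarith), ?_⟩
  intro w hw z hz0 hzn
  have hwc : ∀ i, |w i| ≤ ϱ := by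
    intro i
    have h1 : |w i| ≤ ‖w‖ := by
      rw [EuclideanSpace.norm_eq, ← Real.sqrt_sq_eq_abs]
      apply Real.sqrt_le_sqrt
      have h3 := Finset.single_le_sum (f := fun j => ‖w j‖ ^ 2)
        (fun j _ => by positivity) (Finset.mem_univ i)
      simpa [Real.norm_eq_abs, sq_abs] using h3
    linarith
  set M := Finset.univ.sup' huniv (fun i => z i) with hMdef
  have hMle : ∀ i, z i ≤ M := fun i => Finset.le_sup' (fun i => z i) (Finset.mem_univ i)
  have hex_nonneg : ∃ i, 0 ≤ z i := by
    by_contra hcon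
    push_neg at hcon
    have h1 : 0 < ∑ i, -(z i) := Finset.sum_pos (fun i _ => by linarith [hcon i]) huniv
    rw [Finset.sum_neg_distrib] at h1
    linarith
  have hM0 : 0 ≤ M := hex_nonneg.elim fun i hi => le_trans hi (hMle i)
  have hex_nonpos : ∃ i, z i ≤ 0 := by
    by_contra hcon
    push_neg at hcon
    have h1 : 0 < ∑ i, z i := Finset.sum_pos (fun i _ => hcon i) huniv
    linarith
  have key : ∃ e ∈ R, c * Real.exp (M - z e.1) ≤ z e.1 - z e.2 := by
    by_contra hno
    push_neg at hno
    set S : ℕ → Finset (Fin m) := fun t => Finset.univ.filter (fun j => M - z j ≤ uSeq c t)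
      with hS
    have hSsub : ∀ t, S t ⊆ S (t + 1) := by
      intro t j hj
      simp only [hS, Finset.mem_filter] at hj ⊢
      exact ⟨hj.1, le_trans hj.2 (uSeq_step hcpos.le t)⟩
    obtain ⟨imax, _, hmax⟩ := Finset.exists_mem_eq_sup' huniv (fun i => z i)
    have himax : ∀ t, imax ∈ S t := by
      intro t
      simp only [hS, Finset.mem_filter]
      refine ⟨Finset.mem_univ _, ?_⟩
      have h1 := uSeq_nonneg hcpos.le t
      have h2 : M = z imax := hmax
      linarith
    have hstep : ∀ t, S t = Finset.univ ∨ t + 1 ≤ (S t).card := by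
      intro t
      induction t with
      | zero =>
        right
        have h1 : (S 0).Nonempty := ⟨imax, himax 0⟩
        have := Finset.card_pos.mpr h1
        omega
      | succ t ih =>
        by_cases hun : S t = Finset.univ
        · left
          apply Finset.univ_subset_iff.mp
          rw [← hun]
          exact hSsub t
        · rcases ih with h | hcard
          · exact absurd h hun
          · have hexj : ∃ j, j ∉ S t := by
              by_contra hall
              push_neg at hall
              exact hun (Finset.eq_univ_iff_forall.mpr hall)
            obtain ⟨j, hj⟩ := hexj
            obtain ⟨a, b, ha, hb, hab⟩ :=
              cross_lemma (P := fun x => x ∈ S t) (hconn imax j) (himax t) hj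
            have hda : M - z a ≤ uSeq c t := by
              have := (Finset.mem_filter.mp ha).2
              simpa [hS] using this
            have hdb : M - z b ≤ uSeq c (t + 1) := by
              have h1 := hno (a, b) hab
              have h2 : Real.exp (M - z a) ≤ Real.exp (uSeq c t) := Real.exp_le_exp.mpr hda
              have h3 : c * Real.exp (M - z a) ≤ c * Real.exp (uSeq c t) :=
                mul_le_mul_of_nonneg_left h2 hcpos.le
              show M - z b ≤ uSeq c t + c * Real.exp (uSeq c t)
              have h4 : z a - z b < c * Real.exp (uSeq c t) := lt_of_lt_of_le h1 h3
              linarith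
            have hbS : b ∈ S (t + 1) := by
              simp only [hS, Finset.mem_filter]
              exact ⟨Finset.mem_univ _, hdb⟩
            right
            have hins : insert b (S t) ⊆ S (t + 1) := by
              intro x hx
              rcases Finset.mem_insert.mp hx with rfl | hx
              · exact hbS
              · exact hSsub t hx
            have h5 := Finset.card_le_card hins
            rw [Finset.card_insert_of_notMem hb] at h5
            omega
    have hall : ∀ j : Fin m, M - z j ≤ D := by
      rcases hstep m with h | h
      · intro j
        have hj : j ∈ S m := h ▸ Finset.mem_univ j
        have := (Finset.mem_filter.mp hj).2
        simpa [hS, hDdef] using this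
      · exfalso
        have h1 := Finset.card_le_univ (S m)
        have h2 : (Finset.univ : Finset (Fin m)).card = m := by simp
        have h3 : Fintype.card (Fin m) = m := Fintype.card_fin m
        omega
    set A := Finset.univ.sup' huniv (fun i => |z i|) with hA
    have hAnn : 0 ≤ A :=
      le_trans (abs_nonneg (z imax)) (Finset.le_sup' (fun i => |z i|) (Finset.mem_univ imax))
    have hzA : ‖z‖ ≤ Real.sqrt m * A := by
      rw [EuclideanSpace.norm_eq]
      have hsum : ∑ i, ‖z i‖ ^ 2 ≤ (m : ℝ) * A ^ 2 := by
        calc ∑ i, ‖z i‖ ^ 2 ≤ ∑ _i : Fin m, A ^ 2 := by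
              apply Finset.sum_le_sum
              intro i _
              rw [Real.norm_eq_abs]
              exact pow_le_pow_left₀ (abs_nonneg _)
                (Finset.le_sup' (fun i => |z i|) (Finset.mem_univ i)) 2
          _ = (m : ℝ) * A ^ 2 := by
              rw [Finset.sum_const, Finset.card_univ, Fintype.card_fin, nsmul_eq_mul]
      calc Real.sqrt (∑ i, ‖z i‖ ^ 2) ≤ Real.sqrt ((m : ℝ) * A ^ 2) := Real.sqrt_le_sqrt hsum
        _ = Real.sqrt m * A := by
            rw [Real.sqrt_mul hmpos.le, Real.sqrt_sq hAnn]
    have hDA : D + 1 ≤ A := by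
      have h1 : Real.sqrt m * (D + 1) ≤ Real.sqrt m * A := le_trans hzn hzA
      exact le_of_mul_le_mul_left h1 hsm
    obtain ⟨i, _, hiA⟩ := Finset.exists_mem_eq_sup' huniv (fun i => |z i|)
    have hiA' : A = |z i| := hA.trans hiA
    rcases le_or_gt 0 (z i) with hzi | hzi
    · obtain ⟨i0, hi0⟩ := hex_nonpos
      have h1 : M - z i0 ≤ D := hall i0
      have h2 : |z i| = z i := abs_of_nonneg hzi
      have h3 := hMle i
      rw [hiA', h2] at hDA
      linarith
    · have h1 : M - z i ≤ D := hall i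
      have h2 : |z i| = -z i := abs_of_neg hzi
      rw [hiA', h2] at hDA
      linarith
  obtain ⟨e₀, he₀, hgood⟩ := key
  have hwge : -ϱ ≤ w e₀.1 := (abs_le.mp (hwc e₀.1)).1
  have h1 : Real.exp (z e₀.1 - ϱ) ≤ Real.exp (z e₀.1 + w e₀.1) :=
    Real.exp_le_exp.mpr (by linarith)
  have h2 : κmin ≤ κ e₀ := Finset.inf'_le κ he₀
  have h3 : Real.exp (z e₀.1 - ϱ) * κmin * (c * Real.exp (M - z e₀.1))
      ≤ Real.exp (z e₀.1 + w e₀.1) * κ e₀ * (z e₀.1 - z e₀.2) := by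
    apply mul_le_mul _ hgood (mul_pos hcpos (Real.exp_pos _)).le
      (mul_nonneg (Real.exp_pos _).le (hκ e₀ he₀).le)
    exact mul_le_mul h1 h2 hκminpos.le (Real.exp_pos _).le
  have hc2 : κmin * c = (N * Real.exp ϱ * κmax + 1) * Real.exp ϱ := by
    rw [hcdef]
    field_simp
  have h4 : Real.exp (z e₀.1 - ϱ) * κmin * (c * Real.exp (M - z e₀.1))
      = (N * Real.exp ϱ * κmax + 1) * Real.exp M := by
    have e1 : Real.exp (z e₀.1 - ϱ) * Real.exp (M - z e₀.1) = Real.exp M / Real.exp ϱ := by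
      rw [← Real.exp_add, ← Real.exp_sub]
      ring_nf
    calc Real.exp (z e₀.1 - ϱ) * κmin * (c * Real.exp (M - z e₀.1))
        = (κmin * c) * (Real.exp (z e₀.1 - ϱ) * Real.exp (M - z e₀.1)) := by ring
      _ = ((N * Real.exp ϱ * κmax + 1) * Real.exp ϱ) * (Real.exp M / Real.exp ϱ) := by
          rw [hc2, e1]
      _ = (N * Real.exp ϱ * κmax + 1) * Real.exp M := by
          field_simp
  have hterm0 : Real.exp (z e₀.1 + w e₀.1) * κ e₀ * (z e₀.2 - z e₀.1)
      ≤ -((N * Real.exp ϱ * κmax + 1) * Real.exp M) := by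
    have h5 : (N * Real.exp ϱ * κmax + 1) * Real.exp M
        ≤ Real.exp (z e₀.1 + w e₀.1) * κ e₀ * (z e₀.1 - z e₀.2) := h4 ▸ h3
    nlinarith [h5]
  have hrest : ∑ e ∈ R.erase e₀, Real.exp (z e.1 + w e.1) * κ e * (z e.2 - z e.1)
      ≤ N * (Real.exp ϱ * κmax * Real.exp M) := by
    calc ∑ e ∈ R.erase e₀, Real.exp (z e.1 + w e.1) * κ e * (z e.2 - z e.1)
        ≤ ∑ _e ∈ R.erase e₀, Real.exp ϱ * κmax * Real.exp M := by
          apply Finset.sum_le_sum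
          intro e he
          have heR : e ∈ R := Finset.mem_of_mem_erase he
          exact term_bound (hκ e heR) (hminmax e heR) (hwc e.1) (hMle e.2)
      _ = ((R.erase e₀).card : ℝ) * (Real.exp ϱ * κmax * Real.exp M) := by
          rw [Finset.sum_const, nsmul_eq_mul]
      _ ≤ N * (Real.exp ϱ * κmax * Real.exp M) := by
          apply mul_le_mul_of_nonneg_right _ (by positivity)
          rw [hN]
          exact_mod_cast Finset.card_erase_le
  rw [← Finset.add_sum_erase R _ he₀]
  have hE : 0 < Real.exp M := Real.exp_pos M
  have hr : (N * Real.exp ϱ * κmax + 1) * Real.exp M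
      = N * (Real.exp ϱ * κmax * Real.exp M) + Real.exp M := by ring
  linarith
end

section
/- (Birch's theorem) Let S be a linear subspace of ℝⁿ and let p, x* ∈ ℝⁿ₊. Then there exists a unique x ∈ ℝⁿ₊ such that x − p ∈ S and log x − log x* ∈ S^⊥ (log taken coordinatewise). -/
open Real Finset in
private lemma phi_lb13 (c t : ℝ) (ht : 0 ≤ t) : -(Real.exp (c - 1)) ≤ t * Real.log t - c * t := by
  rcases eq_or_lt_of_le ht with h | h
  · simpa [← h] using (neg_nonpos.mpr (Real.exp_pos (c-1)).le)
  · have h1 : Real.log (Real.exp (c-1) / t) ≤ Real.exp (c-1) / t - 1 :=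
      Real.log_le_sub_one_of_pos (by positivity)
    rw [Real.log_div (Real.exp_ne_zero _) (ne_of_gt h), Real.log_exp] at h1
    have h3 := mul_le_mul_of_nonneg_left h1 h.le
    have h4 : t * (Real.exp (c-1)/t) = Real.exp (c-1) := by field_simp
    rw [mul_sub t (Real.exp (c-1)/t) 1, h4, mul_one] at h3
    nlinarith

private lemma phi_coercive13 (c t M : ℝ) (h : t * Real.log t - c * t ≤ M) :
    t ≤ max (Real.exp (c+1)) M := by
  by_contra hcon
  push_neg at hcon
  have h1 : Real.exp (c+1) < t := lt_of_le_of_lt (le_max_left _ _) hcon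
  have htpos : 0 < t := lt_trans (Real.exp_pos _) h1
  have h2 : c + 1 < Real.log t := (Real.lt_log_iff_exp_lt htpos).mpr h1
  have h3 := mul_lt_mul_of_pos_left h2 htpos
  have h4 : M < t := lt_of_le_of_lt (le_max_right _ _) hcon
  nlinarith

private lemma phi_cvx13 (c a b t : ℝ) (ha : 0 ≤ a) (hb : 0 ≤ b) (ht0 : 0 ≤ t) (ht1 : t ≤ 1) :
    ((1-t)*a + t*b) * Real.log ((1-t)*a + t*b) - c * ((1-t)*a + t*b) ≤
      (a * Real.log a - c * a) + t * ((b * Real.log b - c * b) - (a * Real.log a - c * a)) := by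
  have hcv := Real.convexOn_mul_log.2 (Set.mem_Ici.2 ha) (Set.mem_Ici.2 hb)
    (by linarith : (0:ℝ) ≤ 1 - t) ht0 (by ring)
  simp only [smul_eq_mul] at hcv
  nlinarith [hcv]

private lemma phi_hasDeriv13 (c v a : ℝ) (ha : 0 < a) :
    HasDerivAt (fun t : ℝ => (a + t*v) * Real.log (a + t*v) - c * (a + t*v))
      ((Real.log a + 1 - c) * v) 0 := by
  have haff : HasDerivAt (fun t : ℝ => a + t * v) v 0 := by
    simpa using ((hasDerivAt_id (0:ℝ)).mul_const v).const_add a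
  have hne : a + 0 * v ≠ 0 := by simpa using ne_of_gt ha
  have h1 := (Real.hasDerivAt_mul_log hne).comp 0 haff
  have h2 : HasDerivAt (fun t : ℝ => c * (a + t*v)) (c * v) 0 := haff.const_mul c
  have h3 := h1.sub h2
  have e : (Real.log a + 1 - c) * v = (Real.log (a + 0 * v) + 1) * v - c * v := by simp; ring
  rw [e]; exact h3

/-- Birch's theorem: for a subspace `S ≤ ℝⁿ` and `p, x* ∈ ℝⁿ₊`, there is a unique
`x ∈ ℝⁿ₊` with `x − p ∈ S` and `log x − log x* ∈ S^⊥` (log coordinatewise). -/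
theorem stmt_13 (n : ℕ) (S : Submodule ℝ (EuclideanSpace ℝ (Fin n)))
    (p xstar : EuclideanSpace ℝ (Fin n)) (hp : ∀ i, 0 < p i) (hx : ∀ i, 0 < xstar i) :
    ∃! x : EuclideanSpace ℝ (Fin n), (∀ i, 0 < x i) ∧ x - p ∈ S ∧
      (WithLp.toLp 2 (fun i => Real.log (x i) - Real.log (xstar i)) : EuclideanSpace ℝ (Fin n)) ∈ Sᗮ := by
  classical
  set c : Fin n → ℝ := fun i => 1 + Real.log (xstar i) with hc
  set f : (EuclideanSpace ℝ (Fin n)) → ℝ := fun x => ∑ i, (x i * Real.log (x i) - c i * x i) with hf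
  have hfc : Continuous f := by
    apply continuous_finset_sum
    intro i _
    exact (Real.continuous_mul_log.comp (EuclideanSpace.proj i).continuous).sub
      (continuous_const.mul (EuclideanSpace.proj i).continuous)
  set K : Set (EuclideanSpace ℝ (Fin n)) := ({x : (EuclideanSpace ℝ (Fin n)) | ∀ i, 0 ≤ x i} ∩ {x : (EuclideanSpace ℝ (Fin n)) | x - p ∈ S}) ∩ {x : (EuclideanSpace ℝ (Fin n)) | f x ≤ f p} with hK
  have hpK : p ∈ K := by
    refine ⟨⟨fun i => (hp i).le, ?_⟩, ?_⟩
    · simp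
    · exact le_refl (f p)
  have hKclosed : IsClosed K := by
    apply IsClosed.inter
    apply IsClosed.inter
    · have : {x : (EuclideanSpace ℝ (Fin n)) | ∀ i, 0 ≤ x i} = ⋂ i, {x : (EuclideanSpace ℝ (Fin n)) | 0 ≤ x i} := by
        ext x; simp [Set.mem_iInter]
      rw [this]
      exact isClosed_iInter fun i =>
        isClosed_le continuous_const (EuclideanSpace.proj i).continuous
    · have : {x : (EuclideanSpace ℝ (Fin n)) | x - p ∈ S} = (fun x : (EuclideanSpace ℝ (Fin n)) => x - p) ⁻¹' (S : Set (EuclideanSpace ℝ (Fin n))) := rfl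
      rw [this]
      exact (Submodule.closed_of_finiteDimensional S).preimage (continuous_id.sub continuous_const)
    · exact isClosed_le hfc continuous_const
  set M : ℝ := f p + ∑ j, Real.exp (c j - 1) with hM
  have hbound : ∀ x ∈ K, ∀ i, x i ≤ max (Real.exp (c i + 1)) M := by
    rintro x ⟨⟨hx0, -⟩, hxf⟩ i
    apply phi_coercive13
    have hsplit : x i * Real.log (x i) - c i * x i
        = f x - ∑ j ∈ Finset.univ.erase i, (x j * Real.log (x j) - c j * x j) := by
      simp only [hf]
      rw [← Finset.add_sum_erase _ _ (Finset.mem_univ i)]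
      ring
    have hxf' : f x ≤ f p := hxf
    rw [hsplit]
    have hterm := Finset.sum_le_sum
      (fun j (_ : j ∈ Finset.univ.erase i) => phi_lb13 (c j) (x j) (hx0 j))
    rw [Finset.sum_neg_distrib] at hterm
    have h4 : ∑ j ∈ Finset.univ.erase i, Real.exp (c j - 1) ≤ ∑ j, Real.exp (c j - 1) :=
      Finset.sum_le_sum_of_subset_of_nonneg (Finset.erase_subset _ _)
        (fun j _ _ => (Real.exp_pos _).le)
    rw [hM]
    linarith
  have hKb : Bornology.IsBounded K := by
    rw [isBounded_iff_forall_norm_le]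
    refine ⟨Real.sqrt (∑ i, (max (Real.exp (c i + 1)) M)^2), fun x hxK => ?_⟩
    rw [EuclideanSpace.norm_eq]
    apply Real.sqrt_le_sqrt
    apply Finset.sum_le_sum
    intro i _
    have h1 := hbound x hxK i
    have h0 : 0 ≤ x i := hxK.1.1 i
    rw [Real.norm_eq_abs, sq_abs]
    nlinarith [le_max_left (Real.exp (c i + 1)) M, Real.exp_pos (c i + 1)]
  have hKcpt : IsCompact K := Metric.isCompact_of_isClosed_isBounded hKclosed hKb
  obtain ⟨a, haK, hamin⟩ := hKcpt.exists_isMinOn ⟨p, hpK⟩ hfc.continuousOn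
  have ha0 : ∀ i, 0 ≤ a i := haK.1.1
  have haS : a - p ∈ S := haK.1.2
  have hmin : ∀ y : (EuclideanSpace ℝ (Fin n)), (∀ i, 0 ≤ y i) → y - p ∈ S → f a ≤ f y := by
    intro y hy0 hyS
    rcases le_or_gt (f y) (f p) with h | h
    · exact isMinOn_iff.mp hamin y ⟨⟨hy0, hyS⟩, h⟩
    · exact le_trans (isMinOn_iff.mp hamin p hpK) h.le
  -- positivity of the minimizer
  have hapos : ∀ i, 0 < a i := by
    by_contra hcon
    push_neg at hcon
    obtain ⟨i₀, hi₀⟩ := hcon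
    have hai₀ : a i₀ = 0 := le_antisymm hi₀ (ha0 i₀)
    set Z : Finset (Fin n) := Finset.univ.filter (fun i => a i = 0) with hZ
    have hi₀Z : i₀ ∈ Z := by simp [hZ, hai₀]
    have hZa : ∀ i ∈ Z, a i = 0 := fun i hi => (Finset.mem_filter.mp hi).2
    set P : ℝ := ∑ i ∈ Z, p i with hP
    have hPpos : 0 < P := Finset.sum_pos' (fun i _ => (hp i).le) ⟨i₀, hi₀Z, hp i₀⟩
    set Cst : ℝ := ∑ i ∈ Finset.univ \ Z,
        ((p i * Real.log (p i) - c i * p i) - (a i * Real.log (a i) - c i * a i))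
      + ∑ i ∈ Z, (p i * Real.log (p i) - c i * p i) with hCst
    set t : ℝ := min (1/2) (Real.exp (-(|Cst| + 1) / P)) with htdef
    have ht0 : 0 < t := lt_min (by norm_num) (Real.exp_pos _)
    have ht1 : t ≤ 1/2 := min_le_left _ _
    have hlogt : Real.log t ≤ -(|Cst| + 1) / P := by
      calc Real.log t ≤ Real.log (Real.exp (-(|Cst|+1)/P)) :=
            Real.log_le_log ht0 (min_le_right _ _)
        _ = -(|Cst|+1)/P := Real.log_exp _
    set y : (EuclideanSpace ℝ (Fin n)) := a + t • (p - a) with hy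
    have hyi : ∀ i, y i = (1 - t) * a i + t * p i := by
      intro i
      rw [hy]
      simp [PiLp.add_apply, PiLp.smul_apply, PiLp.sub_apply, smul_eq_mul]
      ring
    have hy0 : ∀ i, 0 ≤ y i := by
      intro i
      rw [hyi]
      have := ha0 i
      have := (hp i).le
      nlinarith
    have hyS : y - p ∈ S := by
      have hrw : y - p = (1 - t) • (a - p) := by
        rw [hy]
        ext i
        simp [PiLp.add_apply, PiLp.smul_apply, PiLp.sub_apply, smul_eq_mul]
        ring
      rw [hrw]
      exact S.smul_mem _ haS
    have hfa : f a ≤ f y := hmin y hy0 hyS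
    have hsum1 : ∑ i ∈ Finset.univ \ Z, (y i * Real.log (y i) - c i * y i)
        ≤ ∑ i ∈ Finset.univ \ Z, ((a i * Real.log (a i) - c i * a i)
            + t * ((p i * Real.log (p i) - c i * p i) - (a i * Real.log (a i) - c i * a i))) := by
      apply Finset.sum_le_sum
      intro i _
      rw [hyi i]
      exact phi_cvx13 (c i) (a i) (p i) t (ha0 i) (hp i).le ht0.le (by linarith)
    have hsum2 : ∑ i ∈ Z, (y i * Real.log (y i) - c i * y i)
        = ∑ i ∈ Z, (t * (p i * Real.log (p i) - c i * p i) + t * Real.log t * p i) := by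
      apply Finset.sum_congr rfl
      intro i hi
      rw [hyi i, hZa i hi]
      have hrw : (1 - t) * 0 + t * p i = t * p i := by ring
      rw [hrw, Real.log_mul (ne_of_gt ht0) (ne_of_gt (hp i))]
      ring
    have hfy : f y = (∑ i ∈ Finset.univ \ Z, (y i * Real.log (y i) - c i * y i))
        + ∑ i ∈ Z, (y i * Real.log (y i) - c i * y i) :=
      (Finset.sum_sdiff (Finset.subset_univ Z)).symm
    have hfa2 : f a = ∑ i ∈ Finset.univ \ Z, (a i * Real.log (a i) - c i * a i) := by
      have hz : ∑ i ∈ Z, (a i * Real.log (a i) - c i * a i) = 0 :=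
        Finset.sum_eq_zero (fun i hi => by rw [hZa i hi]; simp)
      simp only [hf]
      rw [← Finset.sum_sdiff (Finset.subset_univ Z), hz, add_zero]
    have key : f y ≤ f a + t * Cst + t * Real.log t * P := by
      rw [hfy]
      calc (∑ i ∈ Finset.univ \ Z, (y i * Real.log (y i) - c i * y i))
            + ∑ i ∈ Z, (y i * Real.log (y i) - c i * y i)
          ≤ (∑ i ∈ Finset.univ \ Z, ((a i * Real.log (a i) - c i * a i)
              + t * ((p i * Real.log (p i) - c i * p i) - (a i * Real.log (a i) - c i * a i))))
            + ∑ i ∈ Z, (t * (p i * Real.log (p i) - c i * p i) + t * Real.log t * p i) :=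
            add_le_add hsum1 (le_of_eq hsum2)
        _ = f a + t * Cst + t * Real.log t * P := by
            rw [hfa2, hCst, hP]
            rw [Finset.sum_add_distrib, Finset.sum_add_distrib, mul_add,
              Finset.mul_sum, Finset.mul_sum, Finset.mul_sum]
            ring
    have hneg : Cst + Real.log t * P ≤ -1 := by
      have h5 := mul_le_mul_of_nonneg_right hlogt hPpos.le
      rw [div_mul_cancel₀ _ (ne_of_gt hPpos)] at h5
      have := le_abs_self Cst
      linarith
    nlinarith
  -- stationarity
  have hstat : ∀ v, v ∈ S → ∑ i, v i * (Real.log (a i) - Real.log (xstar i)) = 0 := by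
    intro v hv
    have happ : ∀ (t : ℝ) i, (a + t • v) i = a i + t * v i := by
      intro t i
      simp [PiLp.add_apply, PiLp.smul_apply, smul_eq_mul]
    have hder : HasDerivAt (fun t : ℝ => f (a + t • v))
        (∑ i, (Real.log (a i) + 1 - c i) * v i) 0 := by
      have hrw : (fun t : ℝ => f (a + t • v))
          = fun t => ∑ i, ((a i + t * v i) * Real.log (a i + t * v i) - c i * (a i + t * v i)) := by
        funext t
        simp only [hf]
        exact Finset.sum_congr rfl (fun i _ => by rw [happ t i])
      rw [hrw]
      exact HasDerivAt.fun_sum (fun i _ => phi_hasDeriv13 (c i) (v i) (a i) (hapos i))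
    have hloc : IsLocalMin (fun t : ℝ => f (a + t • v)) 0 := by
      have hev : ∀ᶠ t in nhds (0:ℝ), ∀ i, 0 ≤ (a + t • v) i := by
        rw [Filter.eventually_all]
        intro i
        have hcont : Continuous (fun t : ℝ => a i + t * v i) := continuous_const.add (continuous_id.mul continuous_const)
        have hmem : ∀ᶠ t in nhds (0:ℝ), (fun t : ℝ => a i + t * v i) t ∈ Set.Ioi (0:ℝ) :=
          hcont.continuousAt.eventually_mem (isOpen_Ioi.mem_nhds (by simpa using hapos i))
        filter_upwards [hmem] with t ht
        rw [happ t i]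
        exact le_of_lt ht
      refine Filter.Eventually.mono hev (fun t ht => ?_)
      have hS' : (a + t • v) - p ∈ S := by
        have hrw : (a + t • v) - p = (a - p) + t • v := by abel
        rw [hrw]
        exact S.add_mem haS (S.smul_mem t hv)
      have h6 := hmin (a + t • v) ht hS'
      simpa using h6
    have hzero := hloc.hasDerivAt_eq_zero hder
    rw [← hzero]
    apply Finset.sum_congr rfl
    intro i _
    rw [hc]
    ring
  have haO : (WithLp.toLp 2 (fun i => Real.log (a i) - Real.log (xstar i)) : EuclideanSpace ℝ (Fin n)) ∈ Sᗮ := by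
    refine (Submodule.mem_orthogonal S _).mpr (fun u hu => ?_)
    have h9 := hstat u hu
    rw [← h9, PiLp.inner_apply]
    exact Finset.sum_congr rfl (fun i _ => by simp [mul_comm])
  refine ⟨a, ⟨hapos, haS, haO⟩, ?_⟩
  rintro y ⟨hy0, hyS, hyO⟩
  have hS' : y - a ∈ S := by
    have h7 := S.sub_mem hyS haS
    have hrw : (y - p) - (a - p) = y - a := by abel
    rwa [hrw] at h7
  have hO' : (WithLp.toLp 2 (fun i => Real.log (y i) - Real.log (a i)) : (EuclideanSpace ℝ (Fin n))) ∈ Sᗮ := by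
    have h8 := Sᗮ.sub_mem hyO haO
    have hrw : (WithLp.toLp 2 (fun i => Real.log (y i) - Real.log (xstar i)) : (EuclideanSpace ℝ (Fin n)))
        - (WithLp.toLp 2 (fun i => Real.log (a i) - Real.log (xstar i)) : (EuclideanSpace ℝ (Fin n)))
        = (WithLp.toLp 2 (fun i => Real.log (y i) - Real.log (a i)) : (EuclideanSpace ℝ (Fin n))) := by
      ext i
      simp [PiLp.sub_apply]
    rwa [hrw] at h8
  have h0 := (Submodule.mem_orthogonal S
      (WithLp.toLp 2 (fun i => Real.log (y i) - Real.log (a i)) : EuclideanSpace ℝ (Fin n))).mp hO' (y - a) hS'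
  have hsum : ∑ i, (y i - a i) * (Real.log (y i) - Real.log (a i)) = 0 := by
    rw [← h0]
    rw [PiLp.inner_apply]
    exact Finset.sum_congr rfl (fun i _ => by simp [mul_comm])
  have hterm : ∀ i ∈ Finset.univ, 0 ≤ (y i - a i) * (Real.log (y i) - Real.log (a i)) := by
    intro i _
    rcases le_total (y i) (a i) with h | h
    · nlinarith [Real.log_le_log (hy0 i) h]
    · nlinarith [Real.log_le_log (hapos i) h]
  have hall := (Finset.sum_eq_zero_iff_of_nonneg hterm).mp hsum
  ext i
  have hzero := hall i (Finset.mem_univ i)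
  by_contra hne
  rcases lt_or_gt_of_ne hne with h | h
  · have hl : Real.log (y i) < Real.log (a i) := Real.log_lt_log (hy0 i) h
    nlinarith
  · have hl : Real.log (a i) < Real.log (y i) := Real.log_lt_log (hapos i) h
    nlinarith
end

section
/- Let Y ∈ ℝ^{n×m}, I ∈ ℝ^{m×d}, set 𝓘 = ran I and K = Π_𝓘(ran Y^⊤), and let p ∈ ℝⁿ₊ and P = (p + ran(YI)) ∩ ℝⁿ₊. Then the map Ψ : P → K defined by Ψ(x) = Π_𝓘 Y^⊤ log x is a bijection between P and K. -/
open Real Filter Matrix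

set_option maxHeartbeats 1000000

private lemma ent_lower (c t : ℝ) (ht : 0 ≤ t) : -Real.exp c ≤ t * Real.log t - c * t := by
  rcases eq_or_lt_of_le ht with h | h
  · rw [← h]; simp [Real.exp_pos c |>.le]
  · have h1 : Real.log (t⁻¹ * Real.exp c) ≤ t⁻¹ * Real.exp c - 1 :=
      Real.log_le_sub_one_of_pos (by positivity)
    have h2 : Real.log (t⁻¹ * Real.exp c) = -Real.log t + c := by
      rw [Real.log_mul (by positivity) (Real.exp_ne_zero c), Real.log_inv, Real.log_exp]
    rw [h2] at h1
    have key := mul_le_mul_of_nonneg_left h1 h.le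
    have hinv : t * t⁻¹ = 1 := mul_inv_cancel₀ h.ne'
    nlinarith [Real.exp_pos c]

private lemma ent_large (c M : ℝ) :
    ∃ R : ℝ, 0 < R ∧ ∀ t, R ≤ t → M ≤ t * Real.log t - c * t := by
  refine ⟨max (Real.exp (c + 1)) (max M 1), lt_max_of_lt_left (Real.exp_pos _), ?_⟩
  intro t ht
  have h1 : Real.exp (c + 1) ≤ t := le_trans (le_max_left _ _) ht
  have h2 : c + 1 ≤ Real.log t := by
    have := Real.log_le_log (Real.exp_pos _) h1
    rwa [Real.log_exp] at this
  have h3 : M ≤ t := le_trans (le_trans (le_max_left _ _) (le_max_right _ _)) ht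
  have h4 : (0:ℝ) < t := lt_of_lt_of_le (Real.exp_pos _) h1
  nlinarith

private lemma term_hasDerivAt (a δ c : ℝ) (ha : a ≠ 0) :
    HasDerivAt (fun t : ℝ => (a + t * δ) * Real.log (a + t * δ) - c * (a + t * δ))
      ((Real.log a + 1) * δ - c * δ) 0 := by
  have hu : HasDerivAt (fun t : ℝ => a + t * δ) δ 0 := (hasDerivAt_mul_const δ).const_add a
  have hml : HasDerivAt (fun y : ℝ => y * Real.log y) (Real.log (a + 0 * δ) + 1) (a + 0 * δ) :=
    Real.hasDerivAt_mul_log (by simpa using ha)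
  have hcomp := hml.comp 0 hu
  have h0 : a + 0 * δ = a := by ring
  rw [h0] at hcomp
  exact hcomp.sub (hu.const_mul c)

/-- Birch's theorem, existence part. -/
private lemma birch {n : ℕ} (S : Submodule ℝ (Fin n → ℝ)) (p v : Fin n → ℝ)
    (hp : ∀ i, 0 < p i) :
    ∃ x : Fin n → ℝ, (∀ i, 0 < x i) ∧ x - p ∈ S ∧
      ∀ s ∈ S, ∑ i, s i * (Real.log (x i) - v i) = 0 := by
  classical
  set H : Fin n → ℝ → ℝ := fun i y => y * Real.log y - (1 + v i) * y with hH
  set g : (Fin n → ℝ) → ℝ := fun x => ∑ i, H i (x i) with hg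
  have hgc : Continuous g := by
    apply continuous_finset_sum
    intro i _
    exact (Real.continuous_mul_log.comp (continuous_apply i)).sub
      (continuous_const.mul (continuous_apply i))
  set C : Set (Fin n → ℝ) := {x | (∀ i, 0 ≤ x i) ∧ x - p ∈ S} with hC
  have hCclosed : IsClosed C := by
    have h1 : IsClosed {x : Fin n → ℝ | ∀ i, 0 ≤ x i} := by
      have : {x : Fin n → ℝ | ∀ i, 0 ≤ x i} = ⋂ i, {x | 0 ≤ x i} := by
        ext x; simp
      rw [this]
      exact isClosed_iInter fun i => isClosed_le continuous_const (continuous_apply i)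
    have h2 : IsClosed {x : Fin n → ℝ | x - p ∈ S} :=
      (Submodule.closed_of_finiteDimensional S).preimage (continuous_id.sub continuous_const)
    exact h1.inter h2
  -- uniform constant
  set c : ℝ := 1 + ∑ i, |v i| with hc
  have hvc : ∀ i, 1 + v i ≤ c := by
    intro i
    have h1 : v i ≤ |v i| := le_abs_self _
    have h2 : |v i| ≤ ∑ j, |v j| :=
      Finset.single_le_sum (fun j _ => abs_nonneg (v j)) (Finset.mem_univ i)
    simp only [hc]; linarith
  -- lower bound for each term
  have hterm_lb : ∀ i t, 0 ≤ t → -Real.exp c ≤ H i t := by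
    intro i t ht
    have := ent_lower c t ht
    have : t * Real.log t - c * t ≤ H i t := by
      simp only [hH]
      nlinarith [hvc i, ht]
    linarith [ent_lower c t ht]
  obtain ⟨R₀, hR₀pos, hR₀⟩ := ent_large c (g p + (n : ℝ) * Real.exp c + 1)
  set R : ℝ := max R₀ (∑ i, p i) with hRdef
  have hpR : ∀ i, p i ≤ R := by
    intro i
    have : p i ≤ ∑ j, p j :=
      Finset.single_le_sum (fun j _ => (hp j).le) (Finset.mem_univ i)
    exact le_trans this (le_max_right _ _)
  have hterm_big : ∀ i t, R ≤ t → g p + (n : ℝ) * Real.exp c + 1 ≤ H i t := by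
    intro i t ht
    have h1 := hR₀ t (le_trans (le_max_left _ _) ht)
    have ht0 : 0 ≤ t := le_trans hR₀pos.le (le_trans (le_max_left _ _) ht)
    have : t * Real.log t - c * t ≤ H i t := by
      simp only [hH]; nlinarith [hvc i]
    linarith
  -- compact set and minimizer
  set K : Set (Fin n → ℝ) := C ∩ Set.Icc 0 (fun _ => R) with hK
  have hKcp : IsCompact K := isCompact_Icc.inter_left hCclosed
  have hpC : p ∈ C := ⟨fun i => (hp i).le, by simp⟩
  have hpK : p ∈ K := by
    refine ⟨hpC, ?_, ?_⟩
    · intro i; exact (hp i).le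
    · intro i; exact hpR i
  obtain ⟨x, hxK, hmin⟩ := hKcp.exists_isMinOn ⟨p, hpK⟩ hgc.continuousOn
  have hxC : x ∈ C := hxK.1
  have hmin' := isMinOn_iff.mp hmin
  have hgxp : g x ≤ g p := hmin' p hpK
  -- global minimality over C
  have hglobal : ∀ y ∈ C, g x ≤ g y := by
    intro y hy
    by_cases hyR : ∀ i, y i ≤ R
    · exact hmin' y ⟨hy, fun i => hy.1 i, fun i => hyR i⟩
    · push_neg at hyR
      obtain ⟨i0, hi0⟩ := hyR
      have hbig := hterm_big i0 (y i0) hi0.le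
      have hrest : ∀ i ∈ Finset.univ.erase i0, -Real.exp c ≤ H i (y i) :=
        fun i _ => hterm_lb i (y i) (hy.1 i)
      have hsum : ∑ i ∈ Finset.univ.erase i0, (-Real.exp c) ≤
          ∑ i ∈ Finset.univ.erase i0, H i (y i) := Finset.sum_le_sum hrest
      have hcard : ((Finset.univ.erase i0).card : ℝ) ≤ (n : ℝ) := by
        have h : (Finset.univ.erase i0).card ≤ n := by
          simpa using (Finset.card_erase_le (s := (Finset.univ : Finset (Fin n))) (a := i0))
        exact_mod_cast h
      have hconst : ∑ _i ∈ Finset.univ.erase i0, (-Real.exp c) =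
          ((Finset.univ.erase i0).card : ℝ) * (-Real.exp c) := by
        rw [Finset.sum_const, nsmul_eq_mul]
      have hsplit : g y = H i0 (y i0) + ∑ i ∈ Finset.univ.erase i0, H i (y i) := by
        rw [hg]; exact (Finset.add_sum_erase _ _ (Finset.mem_univ i0)).symm
      have hexp : (0:ℝ) < Real.exp c := Real.exp_pos c
      nlinarith [hsum, hbig, hcard, hexp]
  -- positivity of the minimizer
  have hpos : ∀ i, 0 < x i := by
    by_contra hcon
    push_neg at hcon
    obtain ⟨i0, hi0⟩ := hcon
    have hz : x i0 = 0 := le_antisymm hi0 (hxC.1 i0)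
    set δ : Fin n → ℝ := fun i => p i - x i with hδ
    set xt : ℝ → (Fin n → ℝ) := fun t => x + t • (p - x) with hxt
    have hxtC : ∀ t ∈ Set.Ioc (0:ℝ) 1, xt t ∈ C := by
      rintro t ⟨ht0, ht1⟩
      constructor
      · intro i
        have : xt t i = (1 - t) * x i + t * p i := by
          simp only [hxt, Pi.add_apply, Pi.smul_apply, Pi.sub_apply, smul_eq_mul]; ring
        rw [this]
        have := hxC.1 i
        nlinarith [hp i]
      · have : xt t - p = (1 - t) • (x - p) := by
          simp only [hxt]
          ext i
          simp only [Pi.add_apply, Pi.smul_apply, Pi.sub_apply, smul_eq_mul]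
          ring
        rw [this]
        exact S.smul_mem _ hxC.2
    set τ : Fin n → ℝ → ℝ := fun i t => (H i (x i + t * δ i) - H i (x i)) / t with hτ
    -- each τ i is eventually bounded above
    have hbound : ∀ i : Fin n, ∃ Ci : ℝ, ∀ᶠ t in nhdsWithin 0 (Set.Ioi (0:ℝ)), τ i t ≤ Ci := by
      intro i
      rcases eq_or_lt_of_le (hxC.1 i) with hxi | hxi
      · -- x i = 0
        refine ⟨-(1 + v i) * p i, ?_⟩
        have hmul : Tendsto (fun t : ℝ => t * p i) (nhdsWithin 0 (Set.Ioi 0)) (nhds 0) := by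
          have hco : Continuous fun t : ℝ => t * p i := continuous_id.mul continuous_const
          have := hco.tendsto 0
          simpa using this.mono_left nhdsWithin_le_nhds
        have hev1 : ∀ᶠ t in nhdsWithin (0:ℝ) (Set.Ioi 0), t * p i ≤ 1 :=
          hmul.eventually (eventually_le_nhds one_pos)
        filter_upwards [hev1, self_mem_nhdsWithin] with t ht1 ht0
        have ht0' : (0:ℝ) < t := ht0
        have htne : t ≠ 0 := ne_of_gt ht0'
        have hδi : δ i = p i := by simp [hδ, ← hxi]
        have : τ i t = p i * Real.log (t * p i) - (1 + v i) * p i := by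
          simp only [hτ, hH, ← hxi, hδi, zero_add, zero_mul, mul_zero, Real.log_zero, sub_zero]
          field_simp
        rw [this]
        have hlog : Real.log (t * p i) ≤ 0 :=
          Real.log_nonpos (mul_nonneg ht0'.le (hp i).le) ht1
        nlinarith [hp i, hlog]
      · -- x i > 0
        set D : ℝ := (Real.log (x i) + 1) * δ i - (1 + v i) * δ i with hD
        have hder : HasDerivAt (fun t : ℝ => H i (x i + t * δ i)) D 0 := by
          simpa only [hH] using term_hasDerivAt (x i) (δ i) (1 + v i) hxi.ne'
        have hslope := hasDerivAt_iff_tendsto_slope.mp hder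
        have hτtend : Tendsto (τ i) (nhdsWithin 0 (Set.Ioi 0)) (nhds D) := by
          have hsub : nhdsWithin (0:ℝ) (Set.Ioi 0) ≤ nhdsWithin 0 {0}ᶜ :=
            nhdsWithin_mono 0 (fun t ht => ne_of_gt ht)
          have := hslope.mono_left hsub
          refine this.congr' ?_
          filter_upwards [self_mem_nhdsWithin] with t ht
          have : t ≠ 0 := ne_of_gt ht
          simp [slope_def_field, hτ]
        exact ⟨D + 1, hτtend.eventually (eventually_le_nhds (lt_add_one D))⟩
    choose Cf hCf using hbound
    -- τ i0 tends to -∞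
    have hτ0 : Tendsto (τ i0) (nhdsWithin 0 (Set.Ioi (0:ℝ))) atBot := by
      have hδ0 : δ i0 = p i0 := by simp [hδ, hz]
      have hmul : Tendsto (fun t : ℝ => t * p i0) (nhdsWithin 0 (Set.Ioi 0))
          (nhdsWithin 0 (Set.Ioi 0)) := by
        rw [tendsto_nhdsWithin_iff]
        constructor
        · have hco : Continuous fun t : ℝ => t * p i0 := continuous_id.mul continuous_const
          have := hco.tendsto 0
          simpa using this.mono_left nhdsWithin_le_nhds
        · filter_upwards [self_mem_nhdsWithin] with t ht
          exact mul_pos ht (hp i0)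
      have hlog : Tendsto (fun t : ℝ => Real.log (t * p i0)) (nhdsWithin 0 (Set.Ioi 0)) atBot :=
        Real.tendsto_log_nhdsGT_zero.comp hmul
      have h1 : Tendsto (fun t : ℝ => p i0 * Real.log (t * p i0) + (-(1 + v i0) * p i0))
          (nhdsWithin 0 (Set.Ioi 0)) atBot :=
        tendsto_atBot_add_const_right _ _ (hlog.const_mul_atBot (hp i0))
      refine h1.congr' ?_
      filter_upwards [self_mem_nhdsWithin] with t ht
      have ht0 : (0:ℝ) < t := ht
      have htne : t ≠ 0 := ne_of_gt ht0
      simp only [hτ, hH, hz, hδ0, zero_add, zero_mul, mul_zero, Real.log_zero, sub_zero]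
      field_simp
      ring
    -- total sum tends to -∞
    have hsum_tend : Tendsto (fun t => ∑ i, τ i t) (nhdsWithin 0 (Set.Ioi (0:ℝ))) atBot := by
      have heq : (fun t => ∑ i, τ i t) =
          fun t => τ i0 t + ∑ i ∈ Finset.univ.erase i0, τ i t := by
        funext t
        exact (Finset.add_sum_erase _ _ (Finset.mem_univ i0)).symm
      rw [heq]
      refine tendsto_atBot_add_right_of_ge' _ (∑ i ∈ Finset.univ.erase i0, Cf i) hτ0 ?_
      have : ∀ᶠ t in nhdsWithin (0:ℝ) (Set.Ioi 0), ∀ i ∈ Finset.univ.erase i0, τ i t ≤ Cf i :=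
        (eventually_all_finset _).mpr fun i _ => hCf i
      filter_upwards [this] with t ht
      exact Finset.sum_le_sum ht
    -- derive contradiction
    have hev : ∀ᶠ t in nhdsWithin (0:ℝ) (Set.Ioi 0), (∑ i, τ i t) ≤ -1 :=
      hsum_tend.eventually (eventually_le_atBot (-1))
    have hIoc : Set.Ioc (0:ℝ) 1 ∈ nhdsWithin (0:ℝ) (Set.Ioi 0) :=
      Ioc_mem_nhdsGT_of_mem ⟨le_refl 0, one_pos⟩
    obtain ⟨t, ht1, ht2⟩ := (hev.and (eventually_of_mem hIoc (fun t ht => ht))).exists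
    have ht0 : (0:ℝ) < t := ht2.1
    have htne : t ≠ 0 := ne_of_gt ht0
    have hgt : g (xt t) - g x = t * ∑ i, τ i t := by
      rw [hg, Finset.mul_sum, ← Finset.sum_sub_distrib]
      refine Finset.sum_congr rfl fun i _ => ?_
      have hxti : xt t i = x i + t * δ i := by
        simp only [hxt, hδ, Pi.add_apply, Pi.smul_apply, Pi.sub_apply, smul_eq_mul]
      rw [hxti]
      simp only [hτ]
      field_simp
    have hge : g x ≤ g (xt t) := hglobal _ (hxtC t ht2)
    nlinarith [hgt, ht1, ht0]
  -- stationarity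
  refine ⟨x, hpos, hxC.2, ?_⟩
  intro s hs
  have hev : ∀ᶠ t : ℝ in nhds 0, ∀ i, 0 < x i + t * s i := by
    rw [eventually_all]
    intro i
    have hc : Continuous fun t : ℝ => x i + t * s i :=
      continuous_const.add (continuous_id.mul continuous_const)
    have h0 : (0:ℝ) < x i + 0 * s i := by simpa using hpos i
    exact (hc.tendsto 0).eventually (eventually_gt_nhds h0)
  have hlm : IsLocalMin (fun t : ℝ => g (x + t • s)) 0 := by
    filter_upwards [hev] with t ht
    have hmem : x + t • s ∈ C := by
      constructor
      · intro i
        have : (x + t • s) i = x i + t * s i := by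
          simp [Pi.add_apply, Pi.smul_apply, smul_eq_mul]
        rw [this]; exact (ht i).le
      · have : x + t • s - p = (x - p) + t • s := by ring_nf
        rw [this]
        exact S.add_mem hxC.2 (S.smul_mem t hs)
    have := hglobal _ hmem
    simpa using this
  have hder : HasDerivAt (fun t : ℝ => g (x + t • s))
      (∑ i, ((Real.log (x i) + 1) * s i - (1 + v i) * s i)) 0 := by
    have heq : (fun t : ℝ => g (x + t • s)) =
        fun t => ∑ i, ((x i + t * s i) * Real.log (x i + t * s i) - (1 + v i) * (x i + t * s i)) := by
      funext t
      simp only [hg, hH]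
      refine Finset.sum_congr rfl fun i _ => ?_
      simp [Pi.add_apply, Pi.smul_apply, smul_eq_mul]
    rw [heq]
    exact HasDerivAt.fun_sum fun i _ => term_hasDerivAt (x i) (s i) (1 + v i) (hpos i).ne'
  have hzero := hlm.hasDerivAt_eq_zero hder
  have hcongr : (∑ i, s i * (Real.log (x i) - v i)) =
      ∑ i, ((Real.log (x i) + 1) * s i - (1 + v i) * s i) :=
    Finset.sum_congr rfl fun i _ => by ring
  rw [hcongr]
  exact hzero

/-- The range of `mulVec A`, viewed as a subspace of Euclidean space. -/
noncomputable def matRangeE {m k : ℕ} (A : Matrix (Fin m) (Fin k) ℝ) :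
    Submodule ℝ (EuclideanSpace ℝ (Fin m)) :=
  Submodule.comap
    (WithLp.linearEquiv 2 ℝ (Fin m → ℝ) : EuclideanSpace ℝ (Fin m) →ₗ[ℝ] (Fin m → ℝ))
    (LinearMap.range A.mulVecLin)

open RealInnerProductSpace in
private lemma inner_symm_eq {m : ℕ} (a b : Fin m → ℝ) :
    ⟪((WithLp.linearEquiv 2 ℝ (Fin m → ℝ)).symm a : EuclideanSpace ℝ (Fin m)),
      ((WithLp.linearEquiv 2 ℝ (Fin m → ℝ)).symm b : EuclideanSpace ℝ (Fin m))⟫ =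
      dotProduct a b := by
  simp [PiLp.inner_apply, RCLike.inner_apply, dotProduct, WithLp.linearEquiv_symm_apply, mul_comm]

private lemma mem_matRangeE_iff {m k : ℕ} (A : Matrix (Fin m) (Fin k) ℝ)
    (z : EuclideanSpace ℝ (Fin m)) :
    z ∈ matRangeE A ↔
      ∃ u : Fin k → ℝ, z = (WithLp.linearEquiv 2 ℝ (Fin m → ℝ)).symm (A.mulVec u) := by
  simp only [matRangeE, Submodule.mem_comap, LinearMap.mem_range, Matrix.mulVecLin_apply,
    LinearEquiv.coe_coe]
  constructor
  · rintro ⟨u, hu⟩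
    exact ⟨u, by rw [hu]; simp⟩
  · rintro ⟨u, rfl⟩
    exact ⟨u, by simp⟩

private lemma L_eq_iff {m d : ℕ} (Imat : Matrix (Fin m) (Fin d) ℝ)
    (z₁ z₂ : EuclideanSpace ℝ (Fin m)) :
    ((matRangeE Imat).subtype.comp (matRangeE Imat).orthogonalProjectionOnto.toLinearMap) z₁ =
      ((matRangeE Imat).subtype.comp (matRangeE Imat).orthogonalProjectionOnto.toLinearMap) z₂ ↔
    z₁ - z₂ ∈ (matRangeE Imat)ᗮ := by
  have hLdef : ∀ w : EuclideanSpace ℝ (Fin m),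
      ((matRangeE Imat).subtype.comp (matRangeE Imat).orthogonalProjectionOnto.toLinearMap) w =
        ↑((matRangeE Imat).orthogonalProjectionOnto w) := fun w => rfl
  constructor
  · intro h
    have h0 : ((matRangeE Imat).subtype.comp
        (matRangeE Imat).orthogonalProjectionOnto.toLinearMap) (z₁ - z₂) = 0 := by
      rw [map_sub, h, sub_self]
    rw [hLdef, Submodule.coe_eq_zero] at h0
    exact Submodule.orthogonalProjectionOnto_eq_zero_iff.mp h0
  · intro h
    have h0 : (matRangeE Imat).orthogonalProjectionOnto (z₁ - z₂) = 0 :=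
      Submodule.orthogonalProjectionOnto_apply_of_mem_orthogonal h
    have h1 : ((matRangeE Imat).subtype.comp
        (matRangeE Imat).orthogonalProjectionOnto.toLinearMap) (z₁ - z₂) = 0 := by
      rw [hLdef, h0]; rfl
    rw [map_sub, sub_eq_zero] at h1
    exact h1

private lemma mem_ortho_of_dot {m d : ℕ} (Imat : Matrix (Fin m) (Fin d) ℝ) (w : Fin m → ℝ)
    (h : ∀ u : Fin d → ℝ, dotProduct (Imat.mulVec u) w = 0) :
    ((WithLp.linearEquiv 2 ℝ (Fin m → ℝ)).symm w : EuclideanSpace ℝ (Fin m)) ∈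
      (matRangeE Imat)ᗮ := by
  rw [Submodule.mem_orthogonal]
  intro z hz
  obtain ⟨u, rfl⟩ := (mem_matRangeE_iff Imat z).mp hz
  rw [inner_symm_eq]
  exact h u

private lemma dot_shift {n m d : ℕ} (Y : Matrix (Fin n) (Fin m) ℝ)
    (Imat : Matrix (Fin m) (Fin d) ℝ) (u : Fin d → ℝ) (w : Fin n → ℝ) :
    dotProduct (Imat.mulVec u) (Yᵀ.mulVec w) =
      dotProduct ((Y * Imat).mulVec u) w := by
  rw [Matrix.dotProduct_mulVec, Matrix.vecMul_transpose, Matrix.mulVec_mulVec]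

/-- Let `Y ∈ ℝ^{n×m}`, `I ∈ ℝ^{m×d}`, `𝓘 = ran I`, `K = Π_𝓘(ran Y^⊤)`, `p ∈ ℝⁿ₊`, and
`P = (p + ran(YI)) ∩ ℝⁿ₊`.  Then `Ψ : P → K`, `Ψ(x) = Π_𝓘 Y^⊤ log x`, is a bijection
between `P` and `K`. -/
theorem stmt_14 (n m d : ℕ) (Y : Matrix (Fin n) (Fin m) ℝ)
    (Imat : Matrix (Fin m) (Fin d) ℝ) (p : Fin n → ℝ) (hp : ∀ i, 0 < p i) :
    Set.BijOn
      (fun x : Fin n → ℝ =>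
        ((matRangeE Imat).subtype.comp
            (matRangeE Imat).orthogonalProjectionOnto.toLinearMap)
          ((WithLp.linearEquiv 2 ℝ (Fin m → ℝ)).symm
            (Yᵀ.mulVec (fun i => Real.log (x i)))))
      {x : Fin n → ℝ | (∀ i, 0 < x i) ∧ ∃ u : Fin d → ℝ, x = p + (Y * Imat).mulVec u}
      (Submodule.map
        ((matRangeE Imat).subtype.comp
          (matRangeE Imat).orthogonalProjectionOnto.toLinearMap)
        (matRangeE Yᵀ) : Set (EuclideanSpace ℝ (Fin m))) := by
  classical
  refine ⟨?_, ?_, ?_⟩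
  · -- MapsTo
    intro x _
    exact Submodule.mem_map.mpr
      ⟨_, (mem_matRangeE_iff Yᵀ _).mpr ⟨fun i => Real.log (x i), rfl⟩, rfl⟩
  · -- InjOn
    rintro x₁ ⟨hx₁pos, u₁, hu₁⟩ x₂ ⟨hx₂pos, u₂, hu₂⟩ heq
    simp only at heq
    have hperp := (L_eq_iff Imat _ _).mp heq
    have hdiff :
        ((WithLp.linearEquiv 2 ℝ (Fin m → ℝ)).symm
            (Yᵀ.mulVec fun i => Real.log (x₁ i)) : EuclideanSpace ℝ (Fin m)) -
          (WithLp.linearEquiv 2 ℝ (Fin m → ℝ)).symm (Yᵀ.mulVec fun i => Real.log (x₂ i)) =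
        (WithLp.linearEquiv 2 ℝ (Fin m → ℝ)).symm
          (Yᵀ.mulVec ((fun i => Real.log (x₁ i)) - fun i => Real.log (x₂ i))) := by
      rw [Matrix.mulVec_sub, map_sub]
    rw [hdiff] at hperp
    have hdot : ∀ u : Fin d → ℝ,
        dotProduct ((Y * Imat).mulVec u)
          ((fun i => Real.log (x₁ i)) - fun i => Real.log (x₂ i)) = 0 := by
      intro u
      have hmem : ((WithLp.linearEquiv 2 ℝ (Fin m → ℝ)).symm (Imat.mulVec u) :
          EuclideanSpace ℝ (Fin m)) ∈ matRangeE Imat :=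
        (mem_matRangeE_iff Imat _).mpr ⟨u, rfl⟩
      have h0 := (Submodule.mem_orthogonal _ _).mp hperp _ hmem
      rw [inner_symm_eq, dot_shift] at h0
      exact h0
    have hxdiff : x₁ - x₂ = (Y * Imat).mulVec (u₁ - u₂) := by
      rw [hu₁, hu₂, Matrix.mulVec_sub]
      abel
    have hsum : ∑ i, (x₁ i - x₂ i) * (Real.log (x₁ i) - Real.log (x₂ i)) = 0 := by
      have h0 := hdot (u₁ - u₂)
      rw [← hxdiff] at h0
      simpa [dotProduct] using h0
    have hterm : ∀ i ∈ Finset.univ,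
        0 ≤ (x₁ i - x₂ i) * (Real.log (x₁ i) - Real.log (x₂ i)) := by
      intro i _
      rcases le_total (x₁ i) (x₂ i) with h | h
      · have := Real.log_le_log (hx₁pos i) h
        nlinarith
      · have := Real.log_le_log (hx₂pos i) h
        nlinarith
    have hzero := (Finset.sum_eq_zero_iff_of_nonneg hterm).mp hsum
    funext i
    have hi := hzero i (Finset.mem_univ i)
    rcases lt_trichotomy (x₁ i) (x₂ i) with h | h | h
    · have := Real.log_lt_log (hx₁pos i) h
      nlinarith
    · exact h
    · have := Real.log_lt_log (hx₂pos i) h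
      nlinarith
  · -- SurjOn
    intro k hk
    obtain ⟨z, hz, rfl⟩ := Submodule.mem_map.mp hk
    obtain ⟨v, rfl⟩ := (mem_matRangeE_iff Yᵀ z).mp hz
    obtain ⟨x, hxpos, hxS, hstat⟩ := birch (LinearMap.range (Y * Imat).mulVecLin) p v hp
    obtain ⟨u, hu⟩ := hxS
    rw [Matrix.mulVecLin_apply] at hu
    refine ⟨x, ⟨hxpos, u, by rw [hu]; abel⟩, ?_⟩
    simp only
    rw [L_eq_iff Imat]
    have hdiff :
        ((WithLp.linearEquiv 2 ℝ (Fin m → ℝ)).symm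
            (Yᵀ.mulVec fun i => Real.log (x i)) : EuclideanSpace ℝ (Fin m)) -
          (WithLp.linearEquiv 2 ℝ (Fin m → ℝ)).symm (Yᵀ.mulVec v) =
        (WithLp.linearEquiv 2 ℝ (Fin m → ℝ)).symm
          (Yᵀ.mulVec ((fun i => Real.log (x i)) - v)) := by
      rw [Matrix.mulVec_sub, map_sub]
    rw [hdiff]
    apply mem_ortho_of_dot
    intro u'
    rw [dot_shift]
    have hmem : (Y * Imat).mulVec u' ∈ LinearMap.range (Y * Imat).mulVecLin :=
      ⟨u', rfl⟩
    have := hstat _ hmem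
    simpa [dotProduct, Pi.sub_apply] using this
end

section
/- Let Y ∈ ℝ^{n×m}, I ∈ ℝ^{m×d}, 𝓘 = ran I, K = Π_𝓘(ran Y^⊤), p ∈ ℝⁿ₊, and P = (p + ran(YI)) ∩ ℝⁿ₊. Then there exists a unique function F : K → 𝓘^⊥ such that Y^⊤ log P = {z + F(z) : z ∈ K}; moreover F is continuous. -/
open Matrix

open Real Finset RealInnerProductSpace Filter Topology

noncomputable def psiB (t : ℝ) : ℝ := t * Real.log t - t

lemma psiB_zero : psiB 0 = 0 := by simp [psiB]

lemma continuous_psiB : Continuous psiB :=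
  Real.continuous_mul_log.sub continuous_id

lemma convexOn_psiB : ConvexOn ℝ (Set.Ici 0) psiB :=
  Real.convexOn_mul_log.sub (concaveOn_id (convex_Ici 0))

lemma hasDerivAt_psiB {t : ℝ} (ht : 0 < t) : HasDerivAt psiB (Real.log t) t := by
  have h := (Real.hasDerivAt_mul_log ht.ne').sub (hasDerivAt_id t)
  have h2 : Real.log t + 1 - 1 = Real.log t := by ring
  rw [h2] at h
  unfold psiB; exact h

lemma neg_one_le_mul_log {t : ℝ} (ht : 0 ≤ t) : -1 ≤ t * Real.log t := by
  rcases eq_or_lt_of_le ht with h | h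
  · simp [← h]
  · have h1 : Real.log t ≥ 1 - 1/t := by
      have := Real.log_le_sub_one_of_pos (x := 1/t) (by positivity)
      have hlog : Real.log (1/t) = - Real.log t := by
        rw [one_div, Real.log_inv]
      linarith
    have : t * Real.log t ≥ t * (1 - 1/t) := mul_le_mul_of_nonneg_left h1 h.le
    have ht' : t * (1 - 1/t) = t - 1 := by field_simp
    nlinarith

lemma mul_log_coer (a : ℝ) : ∃ C : ℝ, 0 ≤ C ∧ ∀ t : ℝ, 0 ≤ t → a * t - C ≤ t * Real.log t := by
  refine ⟨1 + |a| * Real.exp a, by positivity, fun t ht => ?_⟩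
  rcases le_or_gt t (Real.exp a) with h | h
  · have h1 : a * t ≤ |a| * Real.exp a := by
      calc a * t ≤ |a| * t := mul_le_mul_of_nonneg_right (le_abs_self a) ht
        _ ≤ |a| * Real.exp a := mul_le_mul_of_nonneg_left h (abs_nonneg a)
    have := neg_one_le_mul_log ht
    linarith
  · have h1 : a ≤ Real.log t := by
      rw [← Real.log_exp a]
      exact Real.log_le_log (Real.exp_pos a) h.le
    have h2 : a * t ≤ t * Real.log t := by
      rw [mul_comm]; exact mul_le_mul_of_nonneg_left h1 ht
    have : 0 ≤ |a| * Real.exp a := by positivity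
    linarith

noncomputable def logvB {n : ℕ} (x : EuclideanSpace ℝ (Fin n)) : EuclideanSpace ℝ (Fin n) :=
  (WithLp.equiv 2 (Fin n → ℝ)).symm (fun i => Real.log (x i))

@[simp] lemma logvB_apply {n : ℕ} (x : EuclideanSpace ℝ (Fin n)) (i : Fin n) :
    logvB x i = Real.log (x i) := rfl

lemma inner_euclidean {n : ℕ} (x y : EuclideanSpace ℝ (Fin n)) :
    ⟪x, y⟫ = ∑ i, x i * y i := by
  simp [PiLp.inner_apply, RCLike.inner_apply, mul_comm]

lemma abs_coord_le_norm {n : ℕ} (x : EuclideanSpace ℝ (Fin n)) (i : Fin n) : |x i| ≤ ‖x‖ := by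
  rw [EuclideanSpace.norm_eq]
  have h1 : |x i| = Real.sqrt (‖x i‖^2) := by
    rw [Real.sqrt_sq_eq_abs, Real.norm_eq_abs, abs_abs]
  rw [h1]
  apply Real.sqrt_le_sqrt
  exact Finset.single_le_sum (f := fun j => ‖x j‖^2) (fun j _ => by positivity) (mem_univ i)

lemma norm_le_sum_coord {n : ℕ} (x : EuclideanSpace ℝ (Fin n)) (hx : ∀ i, 0 ≤ x i) :
    ‖x‖ ≤ ∑ i, x i := by
  rw [EuclideanSpace.norm_eq]
  have h1 : ∀ i, ‖x i‖^2 = (x i)^2 := fun i => by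
    rw [Real.norm_eq_abs, sq_abs]
  calc Real.sqrt (∑ i, ‖x i‖^2) = Real.sqrt (∑ i, (x i)^2) := by simp_rw [h1]
    _ ≤ Real.sqrt ((∑ i, x i)^2) := Real.sqrt_le_sqrt
        (Finset.sum_sq_le_sq_sum_of_nonneg (fun i _ => hx i))
    _ = ∑ i, x i := Real.sqrt_sq (Finset.sum_nonneg (fun i _ => hx i))

lemma birch_surj {n : ℕ} (S : Submodule ℝ (EuclideanSpace ℝ (Fin n)))
    (p : EuclideanSpace ℝ (Fin n)) (hp : ∀ i, 0 < p i) (z : S) :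
    ∃ x : EuclideanSpace ℝ (Fin n), (∀ i, 0 < x i) ∧ x - p ∈ S ∧
      S.orthogonalProjectionOnto (logvB x) = z := by
  classical
  set zv : EuclideanSpace ℝ (Fin n) := (z : EuclideanSpace ℝ (Fin n)) with hzv
  set g : EuclideanSpace ℝ (Fin n) → ℝ := fun x => (∑ i, psiB (x i)) - ⟪zv, x⟫ with hg
  have hcoord : ∀ i : Fin n, Continuous (fun x : EuclideanSpace ℝ (Fin n) => x i) := by
    intro i
    exact (continuous_apply i).comp (PiLp.continuous_ofLp 2 (fun _ : Fin n => ℝ))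
  have hg_cont : Continuous g := by
    apply Continuous.sub
    · exact continuous_finset_sum _ (fun i _ => continuous_psiB.comp (hcoord i))
    · exact continuous_const.inner continuous_id
  set C : Set (EuclideanSpace ℝ (Fin n)) := {x | (∀ i, 0 ≤ x i) ∧ x - p ∈ S} with hC
  have hC_closed : IsClosed C := by
    have h1 : IsClosed {x : EuclideanSpace ℝ (Fin n) | ∀ i, 0 ≤ x i} := by
      have he : {x : EuclideanSpace ℝ (Fin n) | ∀ i, 0 ≤ x i}
          = ⋂ i, (fun x : EuclideanSpace ℝ (Fin n) => x i) ⁻¹' Set.Ici 0 := by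
        ext x; simp [Set.mem_iInter]
      rw [he]
      exact isClosed_iInter (fun i => (isClosed_Ici).preimage (hcoord i))
    have h2 : IsClosed {x : EuclideanSpace ℝ (Fin n) | x - p ∈ S} :=
      (Submodule.closed_of_finiteDimensional S).preimage (continuous_id.sub continuous_const)
    have he : C = {x : EuclideanSpace ℝ (Fin n) | ∀ i, 0 ≤ x i}
        ∩ {x : EuclideanSpace ℝ (Fin n) | x - p ∈ S} := rfl
    rw [he]
    exact h1.inter h2
  have hpC : p ∈ C := ⟨fun i => (hp i).le, by simp⟩
  -- coercivity
  choose Cc hCc0 hCc using fun i : Fin n => mul_log_coer (2 + zv i)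
  have hg_lb : ∀ x ∈ C, ‖x‖ - (∑ i, Cc i) ≤ g x := by
    intro x hx
    have h1 : g x = ∑ i, (psiB (x i) - zv i * x i) := by
      simp only [hg, inner_euclidean, ← Finset.sum_sub_distrib]
    have h2 : ∀ i ∈ Finset.univ, x i - Cc i ≤ psiB (x i) - zv i * x i := by
      intro i _
      have := hCc i (x i) (hx.1 i)
      simp only [psiB]
      nlinarith [this]
    have h3 : ∑ i, (x i - Cc i) ≤ ∑ i, (psiB (x i) - zv i * x i) := Finset.sum_le_sum h2
    rw [Finset.sum_sub_distrib] at h3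
    have h4 := norm_le_sum_coord x hx.1
    rw [h1]; linarith
  -- compact sublevel set
  set D : Set (EuclideanSpace ℝ (Fin n)) := C ∩ {x | g x ≤ g p} with hD
  have hD_closed : IsClosed D := hC_closed.inter (isClosed_le hg_cont continuous_const)
  have hD_bdd : Bornology.IsBounded D := by
    apply Metric.isBounded_iff_subset_closedBall 0 |>.2
    refine ⟨g p + ∑ i, Cc i, fun x hx => ?_⟩
    have := hg_lb x hx.1
    have := hx.2
    simp only [Metric.mem_closedBall, dist_zero_right]
    simp only [Set.mem_setOf_eq] at *
    linarith
  have hD_comp : IsCompact D := Metric.isCompact_of_isClosed_isBounded hD_closed hD_bdd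
  have hpD : p ∈ D := ⟨hpC, show g p ≤ g p from le_rfl⟩
  obtain ⟨x0, hx0D, hx0min⟩ := hD_comp.exists_isMinOn ⟨p, hpD⟩ hg_cont.continuousOn
  have hx0C : x0 ∈ C := hx0D.1
  have hx0glob : ∀ y ∈ C, g x0 ≤ g y := by
    intro y hy
    rcases le_or_gt (g y) (g p) with h | h
    · exact hx0min ⟨hy, h⟩
    · exact le_trans (hx0min hpD) h.le
  -- positivity of minimizer
  have hx0pos : ∀ i, 0 < x0 i := by
    by_contra hcon
    push_neg at hcon
    obtain ⟨j, hj⟩ := hcon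
    have hj0 : x0 j = 0 := le_antisymm hj (hx0C.1 j)
    set K : ℝ := (∑ i, (psiB (p i) - psiB (x0 i))) - ⟪zv, p - x0⟫ with hK
    have key : ∀ t : ℝ, 0 < t → t ≤ 1 → 0 ≤ t * K + t * p j * Real.log t := by
      intro t ht ht1
      set xt : EuclideanSpace ℝ (Fin n) := x0 + t • (p - x0) with hxt
      have hxt_coord : ∀ i, xt i = x0 i + t * (p i - x0 i) := by
        intro i
        simp [hxt, PiLp.add_apply, PiLp.smul_apply, PiLp.sub_apply, smul_eq_mul]
      have hxtC : xt ∈ C := by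
        constructor
        · intro i
          rw [hxt_coord i]
          nlinarith [hx0C.1 i, (hp i).le]
        · have : xt - p = (1 - t) • (x0 - p) := by
            rw [hxt]; module
          rw [this]
          exact S.smul_mem _ hx0C.2
      have hmin := hx0glob xt hxtC
      -- bound g xt - g x0
      have hinner : ⟪zv, xt⟫ = ⟪zv, x0⟫ + t * ⟪zv, p - x0⟫ := by
        rw [hxt, inner_add_right, real_inner_smul_right]
      have hterm : ∀ i ∈ Finset.univ,
          psiB (xt i) - psiB (x0 i) ≤ t * (psiB (p i) - psiB (x0 i))
            + (if i = j then t * p j * Real.log t else 0) := by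
        intro i _
        by_cases hij : i = j
        · subst hij
          have e1 : xt i = t * p i := by rw [hxt_coord, hj0]; ring
          have hcalc : psiB (t * p i) = t * p i * Real.log t + t * psiB (p i) := by
            simp only [psiB]
            rw [Real.log_mul ht.ne' (hp i).ne']
            ring
          rw [e1, hcalc, hj0, psiB_zero, if_pos rfl]
          ring_nf
          try linarith
        · rw [if_neg hij, add_zero]
          have hconv := convexOn_psiB.2 (Set.mem_Ici.2 (hx0C.1 i)) (Set.mem_Ici.2 (hp i).le)
            (by linarith : (0:ℝ) ≤ 1 - t) ht.le (by ring)
          have harg : (1 - t) • x0 i + t • p i = xt i := by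
            rw [hxt_coord]; simp [smul_eq_mul]; ring
          rw [harg] at hconv
          simp only [smul_eq_mul] at hconv
          nlinarith [hconv]
      have hsum := Finset.sum_le_sum hterm
      have hsum2 : ∑ i, (t * (psiB (p i) - psiB (x0 i))
          + (if i = j then t * p j * Real.log t else 0))
          = t * (∑ i, (psiB (p i) - psiB (x0 i))) + t * p j * Real.log t := by
        rw [Finset.sum_add_distrib, Finset.mul_sum, Finset.sum_ite_eq' Finset.univ j]
        simp
      have hgdiff : g xt - g x0 = (∑ i, (psiB (xt i) - psiB (x0 i))) - t * ⟪zv, p - x0⟫ := by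
        simp only [hg]
        rw [hinner, Finset.sum_sub_distrib]
        ring
      rw [Finset.sum_sub_distrib] at hsum
      calc (0:ℝ) ≤ g xt - g x0 := by linarith [hmin]
        _ = (∑ i, psiB (xt i)) - (∑ i, psiB (x0 i)) - t * ⟪zv, p - x0⟫ := by
            rw [hgdiff, Finset.sum_sub_distrib]
        _ ≤ t * (∑ i, (psiB (p i) - psiB (x0 i))) + t * p j * Real.log t
            - t * ⟪zv, p - x0⟫ := by rw [hsum2] at hsum; linarith
        _ = t * K + t * p j * Real.log t := by rw [hK]; ring
    -- contradiction
    set t0 : ℝ := Real.exp (-(|K| + 1)/(p j)) with ht0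
    have ht0pos : 0 < t0 := Real.exp_pos _
    have ht0le : t0 ≤ 1 := by
      rw [ht0]
      apply Real.exp_le_one_iff.2
      apply div_nonpos_of_nonpos_of_nonneg
      · have := abs_nonneg K; linarith
      · exact (hp j).le
    have hlog : Real.log t0 = -(|K| + 1)/(p j) := Real.log_exp _
    have := key t0 ht0pos ht0le
    rw [hlog] at this
    have hpj := hp j
    have hexpand : t0 * p j * (-(|K| + 1) / p j) = t0 * (-(|K| + 1)) := by
      field_simp
    rw [hexpand] at this
    nlinarith [le_abs_self K, ht0pos]
  -- stationarity
  have hstat : ∀ s : EuclideanSpace ℝ (Fin n), s ∈ S → ⟪logvB x0 - zv, s⟫ = 0 := by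
    intro s hs
    have hloc : IsLocalMin (fun ε : ℝ => g (x0 + ε • s)) 0 := by
      have hev : ∀ᶠ ε : ℝ in 𝓝 0, ∀ i, 0 < x0 i + ε * s i := by
        rw [Filter.eventually_all]
        intro i
        have hcont : Continuous (fun ε : ℝ => x0 i + ε * s i) :=
          continuous_const.add (continuous_id.mul continuous_const)
        have : Tendsto (fun ε : ℝ => x0 i + ε * s i) (𝓝 0) (𝓝 (x0 i)) := by
          have := hcont.tendsto 0
          simpa using this
        exact this (Ioi_mem_nhds (hx0pos i))
      apply Filter.Eventually.mono hev
      intro ε hε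
      have hmem : x0 + ε • s ∈ C := by
        constructor
        · intro i
          have := hε i
          have harg : (x0 + ε • s) i = x0 i + ε * s i := by
            simp [PiLp.add_apply, PiLp.smul_apply, smul_eq_mul]
          rw [harg]; exact this.le
        · have : x0 + ε • s - p = (x0 - p) + ε • s := by module
          rw [this]
          exact S.add_mem hx0C.2 (S.smul_mem _ hs)
      have := hx0glob _ hmem
      simpa using this
    have hder : HasDerivAt (fun ε : ℝ => g (x0 + ε • s))
        ((∑ i, Real.log (x0 i) * s i) - ⟪zv, s⟫) 0 := by
      have heq : (fun ε : ℝ => g (x0 + ε • s))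
          = fun ε => (∑ i, psiB (x0 i + ε * s i)) - (⟪zv, x0⟫ + ε * ⟪zv, s⟫) := by
        funext ε
        have e1 : ∀ i, (x0 + ε • s) i = x0 i + ε * s i := fun i => by
          simp [PiLp.add_apply, PiLp.smul_apply, smul_eq_mul]
        simp only [hg]
        rw [inner_add_right, real_inner_smul_right]
        congr 1
      rw [heq]
      apply HasDerivAt.sub
      · apply HasDerivAt.fun_sum
        intro i _
        have haff : HasDerivAt (fun ε : ℝ => x0 i + ε * s i) (s i) 0 :=
          (hasDerivAt_mul_const (s i)).const_add (x0 i)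
        have hpsi : HasDerivAt psiB (Real.log (x0 i)) (x0 i + 0 * s i) := by
          simpa using hasDerivAt_psiB (hx0pos i)
        have := hpsi.comp 0 haff
        exact this
      · have : HasDerivAt (fun ε : ℝ => ⟪zv, x0⟫ + ε * ⟪zv, s⟫) (⟪zv, s⟫) 0 :=
          (hasDerivAt_mul_const _).const_add _
        simpa using this
    have hzero := hloc.hasDerivAt_eq_zero hder
    have h1 : ⟪logvB x0, s⟫ = ∑ i, Real.log (x0 i) * s i := by
      rw [inner_euclidean]
      exact Finset.sum_congr rfl fun i _ => by rw [logvB_apply]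
    rw [inner_sub_left, h1]
    linarith [hzero]
  -- conclude
  have horth : logvB x0 - zv ∈ Sᗮ := by
    rw [Submodule.mem_orthogonal']
    intro u hu
    exact hstat u hu
  refine ⟨x0, hx0pos, hx0C.2, ?_⟩
  have hdecomp : logvB x0 = zv + (logvB x0 - zv) := by abel
  rw [hdecomp, map_add]
  have h1 : S.orthogonalProjectionOnto zv = z := Submodule.orthogonalProjectionOnto_mem_subspace_eq_self z
  have h2 : S.orthogonalProjectionOnto (logvB x0 - zv) = 0 :=
    Submodule.orthogonalProjectionOnto_apply_of_mem_orthogonal horth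
  rw [h1, h2, add_zero]

/-- coercivity of `θ(t) = (t - p) log t`. -/
lemma theta_lb (A pi : ℝ) (hA : 0 ≤ A) (hpi : 0 < pi) :
    ∃ C : ℝ, 0 ≤ C ∧ ∀ t : ℝ, 0 < t → A * t - C ≤ (t - pi) * Real.log t := by
  set T : ℝ := max (2 * pi) (Real.exp (2 * A)) with hT
  have hT0 : 0 < T := lt_of_lt_of_le (Real.exp_pos _) (le_max_right _ _)
  set M0 : ℝ := max 0 (Real.log T) with hM0
  refine ⟨A * T + 1 + pi * M0, by positivity, fun t ht => ?_⟩
  rcases le_or_gt t T with h | h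
  · -- t ≤ T
    have hlog : Real.log t ≤ M0 := le_max_of_le_right (Real.log_le_log ht h)
    have h1 : pi * Real.log t ≤ pi * M0 := mul_le_mul_of_nonneg_left hlog hpi.le
    have h2 : -1 ≤ t * Real.log t := neg_one_le_mul_log ht.le
    have h3 : A * t ≤ A * T := mul_le_mul_of_nonneg_left h hA
    have : (t - pi) * Real.log t = t * Real.log t - pi * Real.log t := by ring
    linarith
  · -- t > T
    have h2p : 2 * pi ≤ t := le_trans (le_max_left _ _) h.le
    have hA2 : 2 * A ≤ Real.log t := by
      rw [← Real.log_exp (2 * A)]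
      exact Real.log_le_log (Real.exp_pos _) (le_trans (le_max_right _ _) h.le)
    have h4 : A * t ≤ (t - pi) * Real.log t := by nlinarith
    have : 0 ≤ A * T + 1 + pi * M0 := by positivity
    linarith

/-- lower bound on coordinates: if `(t - p) log t ≤ B` then `t` is not too small. -/
lemma theta_small (pi B t : ℝ) (hpi : 0 < pi) (hB : 0 ≤ B) (ht : 0 < t)
    (h : (t - pi) * Real.log t ≤ B) :
    min (min 1 (pi/2)) (Real.exp (-(2*B/pi))) ≤ t := by
  by_contra hc
  push_neg at hc
  have h1 : t < 1 := lt_of_lt_of_le hc (le_trans (min_le_left _ _) (min_le_left _ _))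
  have h2 : t < pi/2 := lt_of_lt_of_le hc (le_trans (min_le_left _ _) (min_le_right _ _))
  have h3 : t < Real.exp (-(2*B/pi)) := lt_of_lt_of_le hc (min_le_right _ _)
  have hlt : Real.log t ≤ 0 := Real.log_nonpos ht.le h1.le
  have key : pi/2 * (-Real.log t) ≤ (t - pi) * Real.log t := by nlinarith
  have h4 : -Real.log t ≤ 2*B/pi := by
    rw [le_div_iff₀ hpi]
    nlinarith
  have h5 : Real.exp (-(2*B/pi)) ≤ t := by
    calc Real.exp (-(2*B/pi)) ≤ Real.exp (Real.log t) := by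
          apply Real.exp_le_exp.2; linarith
      _ = t := Real.exp_log ht
  linarith

lemma cont_logv_comp {n : ℕ} {X : Type*} [TopologicalSpace X] (g : X → EuclideanSpace ℝ (Fin n))
    (hg : Continuous g) (hpos : ∀ x i, 0 < g x i) : Continuous (fun x => logvB (g x)) := by
  have h1 : Continuous fun x => (fun i => Real.log (g x i) : Fin n → ℝ) := by
    apply continuous_pi
    intro i
    rw [continuous_iff_continuousAt]
    intro x
    have hco : Continuous fun x : X => g x i :=
      (continuous_apply i).comp ((PiLp.continuous_ofLp 2 (fun _ : Fin n => ℝ)).comp hg)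
    exact ContinuousAt.comp (x := x) (Real.continuousAt_log (hpos x i).ne') hco.continuousAt
  exact (PiLp.continuous_toLp 2 (fun _ : Fin n => ℝ)).comp h1

lemma birch_bounds {n : ℕ} (S : Submodule ℝ (EuclideanSpace ℝ (Fin n)))
    (p : EuclideanSpace ℝ (Fin n)) (hp : ∀ i, 0 < p i) (R : ℝ) (hR : 0 ≤ R) :
    ∃ M : ℝ, 0 ≤ M ∧ ∃ δ : Fin n → ℝ, (∀ i, 0 < δ i) ∧
      ∀ x : EuclideanSpace ℝ (Fin n), (∀ i, 0 < x i) → x - p ∈ S →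
        ‖(S.orthogonalProjectionOnto (logvB x) : EuclideanSpace ℝ (Fin n))‖ ≤ R →
        ‖x‖ ≤ M ∧ ∀ i, δ i ≤ x i := by
  classical
  choose C1 hC10 hC1 using fun i : Fin n => theta_lb (R + 1) (p i) (by linarith) (hp i)
  choose C0 hC00 hC0 using fun i : Fin n => theta_lb 0 (p i) le_rfl (hp i)
  set M : ℝ := (∑ i, C1 i) + R * ‖p‖ with hM
  have hM0 : 0 ≤ M := add_nonneg (Finset.sum_nonneg fun i _ => hC10 i) (mul_nonneg hR (norm_nonneg _))
  set B : ℝ := R * (M + ‖p‖) + ∑ i, C0 i with hB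
  have hB0 : 0 ≤ B := add_nonneg (mul_nonneg hR (add_nonneg hM0 (norm_nonneg _))) (Finset.sum_nonneg fun i _ => hC00 i)
  refine ⟨M, hM0, fun j => min (min 1 (p j / 2)) (Real.exp (-(2 * B / p j))),
    fun j => lt_min (lt_min one_pos (by linarith [hp j])) (Real.exp_pos _), ?_⟩
  intro x hx hxS hproj
  -- key identity
  have hkey : ∑ i, (x i - p i) * Real.log (x i)
      ≤ R * (‖x‖ + ‖p‖) := by
    have h0 : ⟪logvB x - (S.orthogonalProjectionOnto (logvB x) : EuclideanSpace ℝ (Fin n)), x - p⟫ = 0 := by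
      rw [real_inner_comm]
      exact (Submodule.sub_starProjection_mem_orthogonal (K := S) (logvB x)) (x - p) hxS
    have h1 : ⟪logvB x, x - p⟫
        = ⟪(S.orthogonalProjectionOnto (logvB x) : EuclideanSpace ℝ (Fin n)), x - p⟫ := by
      rw [inner_sub_left] at h0; linarith
    have h2 : ⟪logvB x, x - p⟫ = ∑ i, (x i - p i) * Real.log (x i) := by
      rw [inner_euclidean]
      exact Finset.sum_congr rfl fun i _ => by rw [logvB_apply, PiLp.sub_apply]; ring
    have h3 : ⟪(S.orthogonalProjectionOnto (logvB x) : EuclideanSpace ℝ (Fin n)), x - p⟫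
        ≤ R * (‖x‖ + ‖p‖) := by
      calc ⟪(S.orthogonalProjectionOnto (logvB x) : EuclideanSpace ℝ (Fin n)), x - p⟫
          ≤ ‖(S.orthogonalProjectionOnto (logvB x) : EuclideanSpace ℝ (Fin n))‖ * ‖x - p‖ :=
            real_inner_le_norm _ _
        _ ≤ R * (‖x‖ + ‖p‖) := by
            apply mul_le_mul hproj (norm_sub_le x p) (norm_nonneg _)
            exact hR
    rw [← h2, h1]; exact h3
  -- norm bound
  have hnorm : ‖x‖ ≤ M := by
    have h1 : ∀ i ∈ Finset.univ, (R+1) * x i - C1 i ≤ (x i - p i) * Real.log (x i) :=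
      fun i _ => hC1 i (x i) (hx i)
    have h2 := Finset.sum_le_sum h1
    rw [Finset.sum_sub_distrib, ← Finset.mul_sum] at h2
    have h3 := norm_le_sum_coord x (fun i => (hx i).le)
    have h4 : 0 ≤ ∑ i, x i := Finset.sum_nonneg (fun i _ => (hx i).le)
    nlinarith [hkey]
  refine ⟨hnorm, fun j => ?_⟩
  -- coordinate lower bound
  have hth : (x j - p j) * Real.log (x j) ≤ B := by
    have h1 : ∀ i ∈ Finset.univ.erase j, -C0 i ≤ (x i - p i) * Real.log (x i) := by
      intro i _
      have := hC0 i (x i) (hx i)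
      linarith
    have h2 := Finset.sum_le_sum h1
    have h3 : (x j - p j) * Real.log (x j)
        + ∑ i ∈ Finset.univ.erase j, (x i - p i) * Real.log (x i)
        = ∑ i, (x i - p i) * Real.log (x i) :=
      Finset.add_sum_erase _ (fun i => (x i - p i) * Real.log (x i)) (Finset.mem_univ j)
    have h4 : ∑ i ∈ Finset.univ.erase j, (-C0 i) = -∑ i ∈ Finset.univ.erase j, C0 i := by
      rw [Finset.sum_neg_distrib]
    have h5 : ∑ i ∈ Finset.univ.erase j, C0 i ≤ ∑ i, C0 i :=
      Finset.sum_le_sum_of_subset_of_nonneg (Finset.erase_subset _ _) (fun i _ _ => hC00 i)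
    have h6 : R * (‖x‖ + ‖p‖) ≤ R * (M + ‖p‖) := by
      apply mul_le_mul_of_nonneg_left _ hR
      linarith
    rw [h4] at h2
    rw [hB]
    linarith [hkey]
  exact theta_small (p j) B (x j) (hp j) hB0 (hx j) hth

set_option maxHeartbeats 2000000 in
theorem birch_homeo {n : ℕ} (S : Submodule ℝ (EuclideanSpace ℝ (Fin n)))
    (p : EuclideanSpace ℝ (Fin n)) (hp : ∀ i, 0 < p i) :
    ∃ φ : {x : EuclideanSpace ℝ (Fin n) // (∀ i, 0 < x i) ∧ x - p ∈ S} ≃ₜ S,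
      ∀ x, (φ x : EuclideanSpace ℝ (Fin n))
        = (S.orthogonalProjectionOnto (logvB x.1) : EuclideanSpace ℝ (Fin n)) := by
  classical
  set Pt := {x : EuclideanSpace ℝ (Fin n) // (∀ i, 0 < x i) ∧ x - p ∈ S} with hPt
  set f : Pt → S := fun x => S.orthogonalProjectionOnto (logvB x.1) with hf
  have hf_cont : Continuous f := by
    have := (S.orthogonalProjectionOnto).continuous.comp
      (cont_logv_comp (fun x : Pt => x.1) continuous_subtype_val (fun x i => x.2.1 i))
    simpa [Function.comp_def] using this
  have hinj : Function.Injective f := by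
    intro x y hxy
    apply Subtype.ext
    -- same proof as core0
    have h1 : logvB x.1 - logvB y.1 ∈ Sᗮ := by
      have hx' : logvB x.1 - (S.orthogonalProjectionOnto (logvB x.1) : EuclideanSpace ℝ (Fin n)) ∈ Sᗮ :=
        Submodule.sub_starProjection_mem_orthogonal (K := S) (logvB x.1)
      have hy' : logvB y.1 - (S.orthogonalProjectionOnto (logvB y.1) : EuclideanSpace ℝ (Fin n)) ∈ Sᗮ :=
        Submodule.sub_starProjection_mem_orthogonal (K := S) (logvB y.1)
      have h := Sᗮ.sub_mem hx' hy'
      have : (S.orthogonalProjectionOnto (logvB x.1) : EuclideanSpace ℝ (Fin n))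
          = S.orthogonalProjectionOnto (logvB y.1) := by
        rw [show S.orthogonalProjectionOnto (logvB x.1) = S.orthogonalProjectionOnto (logvB y.1) from hxy]
      rw [this] at h
      simpa using h
    have hxy' : x.1 - y.1 ∈ S := by
      have := S.sub_mem x.2.2 y.2.2
      simpa using this
    have h2 : ⟪logvB x.1 - logvB y.1, x.1 - y.1⟫ = 0 := by
      rw [real_inner_comm]; exact h1 (x.1 - y.1) hxy'
    rw [inner_euclidean] at h2
    have hterm : ∀ i ∈ Finset.univ, (0:ℝ) ≤ (logvB x.1 - logvB y.1) i * (x.1 - y.1) i := by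
      intro i _
      have he : (logvB x.1 - logvB y.1) i * (x.1 - y.1) i
          = (Real.log (x.1 i) - Real.log (y.1 i)) * (x.1 i - y.1 i) := by
        simp [PiLp.sub_apply]
      rw [he]
      rcases lt_trichotomy (x.1 i) (y.1 i) with h | h | h
      · nlinarith [Real.log_lt_log (x.2.1 i) h]
      · simp [h]
      · nlinarith [Real.log_lt_log (y.2.1 i) h]
    have hz := (Finset.sum_eq_zero_iff_of_nonneg hterm).1 h2
    ext i
    have hzi := hz i (Finset.mem_univ i)
    have hzi' : (Real.log (x.1 i) - Real.log (y.1 i)) * (x.1 i - y.1 i) = 0 := by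
      simpa [PiLp.sub_apply] using hzi
    rcases lt_trichotomy (x.1 i) (y.1 i) with h | h | h
    · nlinarith [Real.log_lt_log (x.2.1 i) h]
    · exact h
    · nlinarith [Real.log_lt_log (y.2.1 i) h]
  have hsurj : Function.Surjective f := by
    intro z
    obtain ⟨x, hx1, hx2, hx3⟩ := birch_surj S p hp z
    exact ⟨⟨x, hx1, hx2⟩, hx3⟩
  have hproper : IsProperMap f := by
    rw [isProperMap_iff_isCompact_preimage]
    refine ⟨hf_cont, fun {K} hK => ?_⟩
    obtain ⟨R0, hR0⟩ := hK.isBounded.exists_norm_le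
    set R : ℝ := max R0 0 with hR
    have hRnn : (0:ℝ) ≤ R := le_max_right _ _
    obtain ⟨M, hM0, δ, hδ0, hbd⟩ := birch_bounds S p hp R hRnn
    -- the modified continuous map
    set mx : EuclideanSpace ℝ (Fin n) → EuclideanSpace ℝ (Fin n) :=
      fun x => (WithLp.equiv 2 (Fin n → ℝ)).symm (fun i => max (x i) (δ i)) with hmx
    have hmx_cont : Continuous mx := by
      apply (PiLp.continuous_toLp 2 (fun _ : Fin n => ℝ)).comp
      apply continuous_pi
      intro i
      exact ((continuous_apply i).comp (PiLp.continuous_ofLp 2 (fun _ : Fin n => ℝ))).max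
        continuous_const
    have hmx_pos : ∀ x i, 0 < mx x i := fun x i => lt_of_lt_of_le (hδ0 i) (le_max_right _ _)
    set h : EuclideanSpace ℝ (Fin n) → S := fun x => S.orthogonalProjectionOnto (logvB (mx x)) with hh
    have hh_cont : Continuous h := by
      have := (S.orthogonalProjectionOnto).continuous.comp (cont_logv_comp mx hmx_cont hmx_pos)
      simpa [Function.comp_def] using this
    set A : Set (EuclideanSpace ℝ (Fin n)) :=
      {x | ∀ i, δ i ≤ x i} ∩ {x | x - p ∈ S} ∩ (h ⁻¹' K) ∩ Metric.closedBall 0 M with hA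
    have hA_comp : IsCompact A := by
      apply Metric.isCompact_of_isClosed_isBounded
      · apply IsClosed.inter
        apply IsClosed.inter
        apply IsClosed.inter
        · have he : {x : EuclideanSpace ℝ (Fin n) | ∀ i, δ i ≤ x i}
              = ⋂ i, (fun x : EuclideanSpace ℝ (Fin n) => x i) ⁻¹' Set.Ici (δ i) := by
            ext x; simp [Set.mem_iInter]
          rw [he]
          exact isClosed_iInter (fun i => (isClosed_Ici).preimage
            ((continuous_apply i).comp (PiLp.continuous_ofLp 2 (fun _ : Fin n => ℝ))))
        · exact (Submodule.closed_of_finiteDimensional S).preimage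
            (continuous_id.sub continuous_const)
        · exact (hK.isClosed).preimage hh_cont
        · exact Metric.isClosed_closedBall
      · exact (Metric.isBounded_closedBall).subset (Set.inter_subset_right)
    have himg : Subtype.val '' (f ⁻¹' K) = A := by
      ext x
      constructor
      · rintro ⟨y, hyK, rfl⟩
        have hfyK : f y ∈ K := hyK
        have hnorm : ‖(S.orthogonalProjectionOnto (logvB y.1) : EuclideanSpace ℝ (Fin n))‖ ≤ R := by
          have := hR0 (f y) hfyK
          exact le_trans this (le_max_left _ _)
        obtain ⟨hM, hδle⟩ := hbd y.1 y.2.1 y.2.2 hnorm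
        have hmxy : mx y.1 = y.1 := by
          ext i
          have : max (y.1 i) (δ i) = y.1 i := max_eq_left (hδle i)
          simpa [hmx] using this
        refine ⟨⟨⟨hδle, y.2.2⟩, ?_⟩, ?_⟩
        · show h y.1 ∈ K
          have : h y.1 = f y := by
            simp only [hh, hf, hmxy]
          rw [this]; exact hfyK
        · simp [Metric.mem_closedBall, dist_zero_right, hM]
      · rintro ⟨⟨⟨hδle, hS⟩, hKmem⟩, hball⟩
        have hpos : ∀ i, 0 < x i := fun i => lt_of_lt_of_le (hδ0 i) (hδle i)
        refine ⟨⟨x, hpos, hS⟩, ?_, rfl⟩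
        show f ⟨x, hpos, hS⟩ ∈ K
        have hmxx : mx x = x := by
          ext i
          have : max (x i) (δ i) = x i := max_eq_left (hδle i)
          simpa [hmx] using this
        have : f ⟨x, hpos, hS⟩ = h x := by
          simp only [hh, hf, hmxx]
        rw [this]; exact hKmem
    rw [Subtype.isCompact_iff, himg]
    exact hA_comp
  have hhom : IsHomeomorph f :=
    isHomeomorph_iff_continuous_isClosedMap_bijective.2 ⟨hf_cont, hproper.isClosedMap, hinj, hsurj⟩
  refine ⟨(Equiv.ofBijective f ⟨hinj, hsurj⟩).toHomeomorphOfContinuousOpen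
    hf_cont hhom.isOpenMap, fun x => rfl⟩



set_option maxHeartbeats 2000000

/-- Let `Y ∈ ℝ^{n×m}`, `I ∈ ℝ^{m×d}`, `𝓘 = ran I`, `K = Π_𝓘(ran Y^⊤)`, `p ∈ ℝⁿ₊`,
`P = (p + ran(YI)) ∩ ℝⁿ₊`.  Then there is a unique `F : K → 𝓘^⊥` with
`Y^⊤ log P = {z + F(z) : z ∈ K}`; moreover any such `F` is continuous. -/
theorem stmt_15 (n m d : ℕ) (Y : Matrix (Fin n) (Fin m) ℝ)
    (Imat : Matrix (Fin m) (Fin d) ℝ) (p : Fin n → ℝ) (hp : ∀ i, 0 < p i) :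
    letI 𝓘 : Submodule ℝ (EuclideanSpace ℝ (Fin m)) := matRangeE Imat
    letI K : Submodule ℝ (EuclideanSpace ℝ (Fin m)) :=
      Submodule.map (𝓘.subtype.comp (𝓘.orthogonalProjectionOnto).toLinearMap) (matRangeE Yᵀ)
    letI P : Set (Fin n → ℝ) :=
      {x | (∀ i, 0 < x i) ∧ ∃ u : Fin d → ℝ, x = p + (Y * Imat).mulVec u}
    letI prop : (K → 𝓘ᗮ) → Prop := fun F =>
      {w : EuclideanSpace ℝ (Fin m) | ∃ x ∈ P,
          w = (WithLp.linearEquiv 2 ℝ (Fin m → ℝ)).symm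
            (Yᵀ.mulVec (fun i => Real.log (x i)))} =
        {w : EuclideanSpace ℝ (Fin m) | ∃ z : K, w = (z : _) + (F z : _)}
    (∃! F : K → 𝓘ᗮ, prop F) ∧ (∀ F : K → 𝓘ᗮ, prop F → Continuous F) := by
  classical
  set 𝓘 : Submodule ℝ (EuclideanSpace ℝ (Fin m)) := matRangeE Imat with h𝓘def
  set Kk : Submodule ℝ (EuclideanSpace ℝ (Fin m)) :=
    Submodule.map (𝓘.subtype.comp (𝓘.orthogonalProjectionOnto).toLinearMap) (matRangeE Yᵀ) with hKdef
  set S : Submodule ℝ (EuclideanSpace ℝ (Fin n)) := matRangeE (Y * Imat) with hSdef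
  set p' : EuclideanSpace ℝ (Fin n) := (WithLp.linearEquiv 2 ℝ (Fin n → ℝ)).symm p with hp'def
  have hp' : ∀ i, 0 < p' i := hp
  set T : EuclideanSpace ℝ (Fin n) →ₗ[ℝ] EuclideanSpace ℝ (Fin m) :=
    (((WithLp.linearEquiv 2 ℝ (Fin m → ℝ)).symm.toLinearMap).comp Yᵀ.mulVecLin).comp
      ((WithLp.linearEquiv 2 ℝ (Fin n → ℝ)) :
        EuclideanSpace ℝ (Fin n) →ₗ[ℝ] (Fin n → ℝ)) with hTdef
  -- membership characterizations
  have hmem𝓘 : ∀ w : EuclideanSpace ℝ (Fin m), w ∈ 𝓘 ↔ ∃ u : Fin d → ℝ,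
      w = (WithLp.linearEquiv 2 ℝ (Fin m → ℝ)).symm (Imat.mulVec u) := by
    intro w
    simp only [h𝓘def, matRangeE, Submodule.mem_comap, LinearMap.mem_range,
      Matrix.mulVecLin_apply]
    constructor
    · rintro ⟨u, hu⟩
      exact ⟨u, by rw [hu]; rfl⟩
    · rintro ⟨u, rfl⟩
      exact ⟨u, rfl⟩
  have hmemS : ∀ v : EuclideanSpace ℝ (Fin n), v ∈ S ↔ ∃ u : Fin d → ℝ,
      v = (WithLp.linearEquiv 2 ℝ (Fin n → ℝ)).symm ((Y * Imat).mulVec u) := by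
    intro v
    simp only [hSdef, matRangeE, Submodule.mem_comap, LinearMap.mem_range,
      Matrix.mulVecLin_apply]
    constructor
    · rintro ⟨u, hu⟩
      exact ⟨u, by rw [hu]; rfl⟩
    · rintro ⟨u, rfl⟩
      exact ⟨u, rfl⟩
  have hmemYT : ∀ w : EuclideanSpace ℝ (Fin m), w ∈ matRangeE Yᵀ ↔
      ∃ v : EuclideanSpace ℝ (Fin n), w = T v := by
    intro w
    simp only [matRangeE, Submodule.mem_comap, LinearMap.mem_range, Matrix.mulVecLin_apply]
    constructor
    · rintro ⟨v, hv⟩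
      refine ⟨(WithLp.linearEquiv 2 ℝ (Fin n → ℝ)).symm v, ?_⟩
      show w = (WithLp.linearEquiv 2 ℝ (Fin m → ℝ)).symm (Yᵀ.mulVec v)
      rw [hv]; rfl
    · rintro ⟨v, rfl⟩
      exact ⟨(WithLp.linearEquiv 2 ℝ (Fin n → ℝ)) v, rfl⟩
  -- adjoint identity
  have hadj : ∀ (v : EuclideanSpace ℝ (Fin n)) (u : Fin d → ℝ),
      ⟪T v, (WithLp.linearEquiv 2 ℝ (Fin m → ℝ)).symm (Imat.mulVec u)⟫
      = ⟪v, (WithLp.linearEquiv 2 ℝ (Fin n → ℝ)).symm ((Y * Imat).mulVec u)⟫ := by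
    intro v u
    rw [inner_euclidean, inner_euclidean]
    show (Yᵀ.mulVec (fun j => v j)) ⬝ᵥ (Imat.mulVec u)
      = (fun j => v j) ⬝ᵥ ((Y * Imat).mulVec u)
    rw [Matrix.mulVec_transpose, Matrix.dotProduct_mulVec, Matrix.dotProduct_mulVec,
      Matrix.vecMul_vecMul]
  -- orthogonality transfer
  have horthT : ∀ v : EuclideanSpace ℝ (Fin n), T v ∈ 𝓘ᗮ ↔ v ∈ Sᗮ := by
    intro v
    rw [Submodule.mem_orthogonal, Submodule.mem_orthogonal]
    constructor
    · intro h w hw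
      obtain ⟨u, rfl⟩ := (hmemS w).1 hw
      have h2 := h _ ((hmem𝓘 _).2 ⟨u, rfl⟩)
      rw [real_inner_comm] at h2 ⊢
      rw [hadj v u] at h2
      exact h2
    · intro h w hw
      obtain ⟨u, rfl⟩ := (hmem𝓘 w).1 hw
      have h2 := h _ ((hmemS _).2 ⟨u, rfl⟩)
      rw [real_inner_comm] at h2 ⊢
      rw [hadj v u]
      exact h2
  set QT : EuclideanSpace ℝ (Fin n) →ₗ[ℝ] EuclideanSpace ℝ (Fin m) :=
    (𝓘.subtype.comp (𝓘.orthogonalProjectionOnto).toLinearMap).comp T with hQTdef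
  have hQT_apply : ∀ v, QT v = (𝓘.orthogonalProjectionOnto (T v) : EuclideanSpace ℝ (Fin m)) :=
    fun v => rfl
  have hYTrange : matRangeE Yᵀ = LinearMap.range T := by
    ext w
    rw [hmemYT w, LinearMap.mem_range]
    exact exists_congr (fun v => eq_comm)
  have hKrange : Kk = LinearMap.range QT := by
    rw [hKdef, hYTrange, ← LinearMap.range_comp]
  have hQT_orth : ∀ v, v ∈ Sᗮ → QT v = 0 := by
    intro v hv
    rw [hQT_apply, Submodule.orthogonalProjectionOnto_apply_of_mem_orthogonal
      ((horthT v).2 hv)]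
    rfl
  have hQTS_inj : ∀ s, s ∈ S → QT s = 0 → s = 0 := by
    intro s hs h0
    have h1 : (𝓘.orthogonalProjectionOnto (T s) : EuclideanSpace ℝ (Fin m)) = 0 := by
      rw [← hQT_apply, h0]
    have h2 : T s ∈ 𝓘ᗮ := by
      have := Submodule.orthogonalProjectionOnto_eq_zero_iff (K := 𝓘) (v := T s)
      apply this.1
      exact Subtype.ext h1
    have h3 : s ∈ Sᗮ := (horthT s).1 h2
    have h4 : ⟪s, s⟫ = 0 := by
      rw [real_inner_comm]
      exact h3 s hs
    exact inner_self_eq_zero.1 h4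
  -- the linear equivalence S ≃ K
  set q : S →ₗ[ℝ] Kk := LinearMap.codRestrict Kk (QT.comp S.subtype)
    (fun s => by rw [hKrange]; exact ⟨s, rfl⟩) with hqdef
  have hq_apply : ∀ s : S, (q s : EuclideanSpace ℝ (Fin m)) = QT s := fun s => rfl
  have hq_inj : Function.Injective q := by
    intro a b hab
    have h1 : QT (a - b : EuclideanSpace ℝ (Fin n)) = 0 := by
      have : (q a : EuclideanSpace ℝ (Fin m)) = q b := by rw [hab]
      rw [hq_apply, hq_apply] at this
      rw [map_sub, this, sub_self]
    have h2 := hQTS_inj _ (S.sub_mem a.2 b.2) h1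
    have : (a : EuclideanSpace ℝ (Fin n)) = b := by
      have := sub_eq_zero.1 h2
      exact this
    exact Subtype.ext this
  have hq_surj : Function.Surjective q := by
    intro z
    have hz : (z : EuclideanSpace ℝ (Fin m)) ∈ LinearMap.range QT := by
      rw [← hKrange]; exact z.2
    obtain ⟨v, hv⟩ := hz
    refine ⟨S.orthogonalProjectionOnto v, ?_⟩
    apply Subtype.ext
    rw [hq_apply]
    have h1 : QT (v - (S.orthogonalProjectionOnto v : EuclideanSpace ℝ (Fin n))) = 0 :=
      hQT_orth _ (Submodule.sub_starProjection_mem_orthogonal (K := S) v)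
    rw [map_sub, sub_eq_zero] at h1
    rw [← h1, hv]
  set e : S ≃ₗ[ℝ] Kk := LinearEquiv.ofBijective q ⟨hq_inj, hq_surj⟩ with hedef
  have he_apply : ∀ s : S, (e s : EuclideanSpace ℝ (Fin m)) = QT s := fun s => rfl
  -- the Birch homeomorphism
  obtain ⟨φ, hφ⟩ := birch_homeo S p' hp'
  -- definition of F0
  set F0 : Kk → 𝓘ᗮ := fun z =>
    (𝓘ᗮ).orthogonalProjectionOnto (T (logvB (φ.symm (e.symm z)).1)) with hF0def
  -- central computations
  have hQTproj : ∀ w : EuclideanSpace ℝ (Fin n),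
      QT ((S.orthogonalProjectionOnto w : EuclideanSpace ℝ (Fin n))) = QT w := by
    intro w
    have h1 : QT (w - (S.orthogonalProjectionOnto w : EuclideanSpace ℝ (Fin n))) = 0 :=
      hQT_orth _ (Submodule.sub_starProjection_mem_orthogonal (K := S) w)
    rw [map_sub, sub_eq_zero] at h1
    exact h1.symm
  have hcentral : ∀ x : {x : EuclideanSpace ℝ (Fin n) // (∀ i, 0 < x i) ∧ x - p' ∈ S},
      (e (φ x) : EuclideanSpace ℝ (Fin m)) = QT (logvB x.1) := by
    intro x
    rw [he_apply, hφ x, hQTproj]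
  have hdecomp : ∀ x : {x : EuclideanSpace ℝ (Fin n) // (∀ i, 0 < x i) ∧ x - p' ∈ S},
      T (logvB x.1) = (e (φ x) : EuclideanSpace ℝ (Fin m))
        + ((𝓘ᗮ).orthogonalProjectionOnto (T (logvB x.1)) : EuclideanSpace ℝ (Fin m)) := by
    intro x
    rw [hcentral x, hQT_apply]
    exact (Submodule.starProjection_add_starProjection_orthogonal (K := 𝓘) (T (logvB x.1))).symm
  -- the set equality for F0
  have hprop0 : {w : EuclideanSpace ℝ (Fin m) | ∃ x ∈ {x : Fin n → ℝ |
        (∀ i, 0 < x i) ∧ ∃ u : Fin d → ℝ, x = p + (Y * Imat).mulVec u},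
        w = (WithLp.linearEquiv 2 ℝ (Fin m → ℝ)).symm (Yᵀ.mulVec (fun i => Real.log (x i)))}
      = {w : EuclideanSpace ℝ (Fin m) | ∃ z : Kk,
          w = (z : EuclideanSpace ℝ (Fin m)) + (F0 z : EuclideanSpace ℝ (Fin m))} := by
    ext w
    simp only [Set.mem_setOf_eq]
    constructor
    · rintro ⟨x, ⟨hxpos, u, hxu⟩, rfl⟩
      have hxS : (WithLp.linearEquiv 2 ℝ (Fin n → ℝ)).symm x - p' ∈ S := by
        apply (hmemS _).2 ⟨u, ?_⟩
        ext i
        have h1 := congrFun hxu i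
        simp only [Pi.add_apply] at h1
        show x i - p' i = ((Y * Imat).mulVec u) i
        have h2 : p' i = p i := rfl
        rw [h1, h2]; ring
      set x' : {x : EuclideanSpace ℝ (Fin n) // (∀ i, 0 < x i) ∧ x - p' ∈ S} :=
        ⟨(WithLp.linearEquiv 2 ℝ (Fin n → ℝ)).symm x, hxpos, hxS⟩ with hx'def
      refine ⟨e (φ x'), ?_⟩
      have h1 : (WithLp.linearEquiv 2 ℝ (Fin m → ℝ)).symm
          (Yᵀ.mulVec (fun i => Real.log (x i))) = T (logvB x'.1) := rfl
      have h2 : F0 (e (φ x')) = (𝓘ᗮ).orthogonalProjectionOnto (T (logvB x'.1)) := by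
        rw [hF0def]
        simp only [LinearEquiv.symm_apply_apply, Homeomorph.symm_apply_apply]
      rw [h1, h2]
      exact hdecomp x'
    · rintro ⟨z, rfl⟩
      set x' := φ.symm (e.symm z) with hx'def
      refine ⟨(WithLp.linearEquiv 2 ℝ (Fin n → ℝ)) x'.1, ⟨x'.2.1, ?_⟩, ?_⟩
      · obtain ⟨u, hu⟩ := (hmemS _).1 x'.2.2
        refine ⟨u, ?_⟩
        funext i
        have h1 := congrArg (fun v : EuclideanSpace ℝ (Fin n) => v i) hu
        simp only [PiLp.sub_apply] at h1
        show x'.1 i = (p + (Y * Imat).mulVec u) i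
        simp only [Pi.add_apply]
        have hpi : p' i = p i := rfl
        have h2 : ((WithLp.linearEquiv 2 ℝ (Fin n → ℝ)).symm ((Y * Imat).mulVec u)
            : EuclideanSpace ℝ (Fin n)) i = ((Y * Imat).mulVec u) i := rfl
        rw [hpi, h2] at h1
        linarith
      · have h1 : (WithLp.linearEquiv 2 ℝ (Fin m → ℝ)).symm
            (Yᵀ.mulVec (fun i => Real.log ((WithLp.linearEquiv 2 ℝ (Fin n → ℝ)) x'.1 i)))
            = T (logvB x'.1) := rfl
        rw [h1]
        have h2 : z = e (φ x') := by
          rw [hx'def, Homeomorph.apply_symm_apply, LinearEquiv.apply_symm_apply]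
        have h3 : F0 z = (𝓘ᗮ).orthogonalProjectionOnto (T (logvB x'.1)) := rfl
        rw [h3, h2]
        exact (hdecomp x').symm
  -- membership of K in 𝓘
  have hKsub𝓘 : ∀ z : Kk, (z : EuclideanSpace ℝ (Fin m)) ∈ 𝓘 := by
    intro z
    have hz : (z : EuclideanSpace ℝ (Fin m)) ∈ LinearMap.range QT := by
      rw [← hKrange]; exact z.2
    obtain ⟨v, hv⟩ := hz
    rw [← hv, hQT_apply]
    exact (𝓘.orthogonalProjectionOnto (T v)).2
  -- decomposition uniqueness
  have hsplit : ∀ (z z' : Kk) (a : 𝓘ᗮ) (b : 𝓘ᗮ),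
      (z : EuclideanSpace ℝ (Fin m)) + a = (z' : EuclideanSpace ℝ (Fin m)) + b →
      z = z' ∧ a = b := by
    intro z z' a b h
    have hproj := congrArg (fun w => (𝓘.orthogonalProjectionOnto w : EuclideanSpace ℝ (Fin m))) h
    simp only [map_add] at hproj
    have e1 : (𝓘.orthogonalProjectionOnto (z : EuclideanSpace ℝ (Fin m))
        : EuclideanSpace ℝ (Fin m)) = z := (Submodule.starProjection_eq_self_iff (K := 𝓘) (v := (z : EuclideanSpace ℝ (Fin m)))).2 (hKsub𝓘 z)
    have e2 : (𝓘.orthogonalProjectionOnto (z' : EuclideanSpace ℝ (Fin m))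
        : EuclideanSpace ℝ (Fin m)) = z' := (Submodule.starProjection_eq_self_iff (K := 𝓘) (v := (z' : EuclideanSpace ℝ (Fin m)))).2 (hKsub𝓘 z')
    have e3 : 𝓘.orthogonalProjectionOnto (a : EuclideanSpace ℝ (Fin m)) = 0 :=
      Submodule.orthogonalProjectionOnto_apply_of_mem_orthogonal a.2
    have e4 : 𝓘.orthogonalProjectionOnto (b : EuclideanSpace ℝ (Fin m)) = 0 :=
      Submodule.orthogonalProjectionOnto_apply_of_mem_orthogonal b.2
    rw [e3, e4] at hproj
    simp only [ZMod.natCast_self, Submodule.coe_zero, add_zero] at hproj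
    rw [e1, e2] at hproj
    have hzz : z = z' := Subtype.ext hproj
    refine ⟨hzz, ?_⟩
    subst hzz
    have := add_left_cancel h
    exact Subtype.ext this
  -- continuity of F0
  have hcontF0 : Continuous F0 := by
    have hc1 : Continuous fun z : Kk => (e.symm z : S) := by
      exact LinearMap.continuous_of_finiteDimensional (e.symm : Kk →ₗ[ℝ] S)
    have hc2 : Continuous fun z : Kk => (φ.symm (e.symm z)).1 :=
      continuous_subtype_val.comp (φ.symm.continuous.comp hc1)
    have hc3 : Continuous fun z : Kk => logvB ((φ.symm (e.symm z)).1) :=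
      cont_logv_comp _ hc2 (fun z i => (φ.symm (e.symm z)).2.1 i)
    have hc4 : Continuous fun z : Kk => T (logvB ((φ.symm (e.symm z)).1)) := by
      have := T.continuous_of_finiteDimensional.comp hc3
      simpa [Function.comp_def] using this
    have := ((𝓘ᗮ).orthogonalProjectionOnto).continuous.comp hc4
    simpa [hF0def, Function.comp_def] using this
  -- assemble
  constructor
  · refine ⟨F0, hprop0, ?_⟩
    intro G hG
    funext z
    have hmemG : (z : EuclideanSpace ℝ (Fin m)) + (G z : EuclideanSpace ℝ (Fin m)) ∈
        {w : EuclideanSpace ℝ (Fin m) | ∃ z' : Kk,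
          w = (z' : EuclideanSpace ℝ (Fin m)) + (F0 z' : EuclideanSpace ℝ (Fin m))} := by
      rw [← hprop0, hG]
      exact ⟨z, rfl⟩
    obtain ⟨z', hz'⟩ := hmemG
    obtain ⟨hzz, hab⟩ := hsplit z z' (G z) (F0 z') hz'
    rw [hab, hzz]
  · intro F hF
    have hFF0 : F = F0 := by
      funext z
      have hmemF : (z : EuclideanSpace ℝ (Fin m)) + (F z : EuclideanSpace ℝ (Fin m)) ∈
          {w : EuclideanSpace ℝ (Fin m) | ∃ z' : Kk,
            w = (z' : EuclideanSpace ℝ (Fin m)) + (F0 z' : EuclideanSpace ℝ (Fin m))} := by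
        rw [← hprop0, hF]
        exact ⟨z, rfl⟩
      obtain ⟨z', hz'⟩ := hmemF
      obtain ⟨hzz, hab⟩ := hsplit z z' (F z) (F0 z') hz'
      rw [hab, hzz]
    rw [hFF0]
    exact hcontF0
end
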